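/- arXiv:2604.06601 — 4 statements merged into one kernel-verified Lean document; each statement's English description precedes it below -/
import Mathlib

section
/- Let L be a finite-dimensional complex vector space and S a graded linear subspace of Sym(L^*), where Sym(L) acts on Sym(L^*) by directional derivatives (v acts as D_v). Define S^⊥ = {f ∈ Sym(L) : (f ⊙ g)(0) = 0 for all g ∈ S}. Then S^⊥ is a homogeneous ideal of Sym(L) if and only if S is closed under translation, i.e., for every f(x) ∈ S and v ∈ L the polynomial f(x+v) lies in S. -/
open MvPolynomial

/-- The constant term of `f ⊙ g`, where `f ∈ Sym L = ℂ[e₁,...,e_r]` acts on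
`g ∈ Sym L^* = ℂ[x₁,...,x_r]` by directional derivatives (`eᵢ ↦ ∂/∂xᵢ`):
`(f ⊙ g)(0) = ∑_m m! ⬝ coeff m f ⬝ coeff m g`. -/
noncomputable def apolar {r : ℕ} (f g : MvPolynomial (Fin r) ℂ) : ℂ :=
  ∑ m ∈ f.support, f.coeff m * g.coeff m * (m.prod fun _ k => (Nat.factorial k : ℂ))

open Finset

variable {r : ℕ}

lemma apolar_eq_of_subset {f g : MvPolynomial (Fin r) ℂ} {t : Finset (Fin r →₀ ℕ)}
    (h : f.support ⊆ t) :
    apolar f g = ∑ m ∈ t, f.coeff m * g.coeff m * (m.prod fun _ k => (Nat.factorial k : ℂ)) := by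
  refine Finset.sum_subset h fun m _ hm => ?_
  rw [MvPolynomial.notMem_support_iff.mp hm]
  ring

lemma apolar_comm (f g : MvPolynomial (Fin r) ℂ) : apolar f g = apolar g f := by
  rw [apolar_eq_of_subset (Finset.subset_union_left (s₂ := g.support)),
    apolar_eq_of_subset (g := f) (Finset.subset_union_right (s₁ := f.support)),
    Finset.union_comm]
  exact Finset.sum_congr rfl fun m _ => by ring

lemma apolar_zero_left (g : MvPolynomial (Fin r) ℂ) : apolar 0 g = 0 := by
  simp [apolar]

lemma apolar_add_left (f f' g : MvPolynomial (Fin r) ℂ) :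
    apolar (f + f') g = apolar f g + apolar f' g := by
  rw [apolar_eq_of_subset (t := f.support ∪ f'.support) (MvPolynomial.support_add),
    apolar_eq_of_subset (t := f.support ∪ f'.support) (f := f) Finset.subset_union_left,
    apolar_eq_of_subset (t := f.support ∪ f'.support) (f := f') Finset.subset_union_right,
    ← Finset.sum_add_distrib]
  exact Finset.sum_congr rfl fun m _ => by rw [MvPolynomial.coeff_add]; ring

lemma apolar_smul_left (a : ℂ) (f g : MvPolynomial (Fin r) ℂ) :
    apolar (a • f) g = a * apolar f g := by
  rw [apolar_eq_of_subset (t := f.support) (f := a • f) (MvPolynomial.support_smul),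
    apolar, Finset.mul_sum]
  exact Finset.sum_congr rfl fun m _ => by
    rw [MvPolynomial.coeff_smul]; simp [smul_eq_mul]; ring

lemma apolar_add_right (f g g' : MvPolynomial (Fin r) ℂ) :
    apolar f (g + g') = apolar f g + apolar f g' := by
  rw [apolar_comm, apolar_add_left, apolar_comm g f, apolar_comm g' f]

lemma apolar_smul_right (a : ℂ) (f g : MvPolynomial (Fin r) ℂ) :
    apolar f (a • g) = a * apolar f g := by
  rw [apolar_comm, apolar_smul_left, apolar_comm g f]

lemma apolar_monomial_right (f : MvPolynomial (Fin r) ℂ) (s : Fin r →₀ ℕ) (c : ℂ) :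
    apolar f (monomial s c) = f.coeff s * c * (s.prod fun _ k => (Nat.factorial k : ℂ)) := by
  classical
  rw [apolar_eq_of_subset (t := f.support ∪ {s}) Finset.subset_union_left,
    Finset.sum_eq_single s]
  · rw [MvPolynomial.coeff_monomial, if_pos rfl]
  · intro m _ hm
    rw [MvPolynomial.coeff_monomial, if_neg (by exact fun h => hm h.symm)]
    ring
  · intro hs; exact absurd (Finset.mem_union_right _ (Finset.mem_singleton_self s)) hs

lemma fact_add_single (m : Fin r →₀ ℕ) (i : Fin r) :
    ((m + Finsupp.single i 1).prod fun _ k => (Nat.factorial k : ℂ)) =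
      (m i + 1) * (m.prod fun _ k => (Nat.factorial k : ℂ)) := by
  classical
  set t : Finset (Fin r) := insert i m.support with ht
  have h1 : (m + Finsupp.single i 1).support ⊆ t := by
    refine (Finsupp.support_add).trans ?_
    intro j hj
    rcases Finset.mem_union.mp hj with h | h
    · exact Finset.mem_insert_of_mem h
    · rw [Finsupp.support_single_ne_zero i one_ne_zero] at h
      exact (Finset.mem_singleton.mp h) ▸ Finset.mem_insert_self i _
  have h2 : m.support ⊆ t := Finset.subset_insert _ _
  rw [Finsupp.prod_of_support_subset _ h1 _ (fun j _ => by simp),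
      Finsupp.prod_of_support_subset _ h2 _ (fun j _ => by simp)]
  have hit : i ∈ t := Finset.mem_insert_self i _
  rw [← Finset.mul_prod_erase t _ hit,
    ← Finset.mul_prod_erase t (fun j => (Nat.factorial (m j) : ℂ)) hit]
  have hprod : ∏ j ∈ t.erase i, ((Nat.factorial ((m + Finsupp.single i 1 : Fin r →₀ ℕ) j)) : ℂ) =
      ∏ j ∈ t.erase i, ((Nat.factorial (m j)) : ℂ) := by
    refine Finset.prod_congr rfl fun j hj => ?_
    have hji : j ≠ i := Finset.ne_of_mem_erase hj
    simp [Finsupp.single_apply, hji.symm]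
  rw [hprod]
  have : (m + Finsupp.single i 1 : Fin r →₀ ℕ) i = m i + 1 := by simp
  rw [this, Nat.factorial_succ]
  push_cast
  ring

lemma coeff_pderiv (i : Fin r) (g : MvPolynomial (Fin r) ℂ) (m : Fin r →₀ ℕ) :
    coeff m (pderiv i g) = ((m i : ℂ) + 1) * coeff (m + Finsupp.single i 1) g := by
  classical
  induction g using MvPolynomial.induction_on' with
  | monomial s a =>
    rw [pderiv_monomial, coeff_monomial, coeff_monomial]
    by_cases h : s = m + Finsupp.single i 1
    · subst h
      rw [if_pos (by rw [add_tsub_cancel_right]), if_pos rfl]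
      have : (m + Finsupp.single i 1 : Fin r →₀ ℕ) i = m i + 1 := by simp
      rw [this]
      push_cast
      ring
    · rw [if_neg h, mul_zero]
      by_cases h2 : s - Finsupp.single i 1 = m
      · rw [if_pos h2]
        have hsi : s i = 0 := by
          by_contra hne
          apply h
          rw [← h2, tsub_add_cancel_of_le]
          rwa [Finsupp.single_le_iff, Nat.one_le_iff_ne_zero]
        rw [hsi]
        simp
      · rw [if_neg h2]
  | add p q hp hq =>
    rw [map_add, coeff_add, coeff_add, hp, hq]
    ring

lemma apolar_X_mul (i : Fin r) (f g : MvPolynomial (Fin r) ℂ) :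
    apolar (X i * f) g = apolar f (pderiv i g) := by
  classical
  rw [apolar, MvPolynomial.support_X_mul, Finset.sum_map, apolar]
  refine Finset.sum_congr rfl fun m hm => ?_
  have he : addLeftEmbedding (Finsupp.single i 1) m = Finsupp.single i 1 + m := rfl
  rw [he, coeff_pderiv]
  have h1 : coeff (Finsupp.single i 1 + m) (X i * f) = coeff m f := by
    rw [MvPolynomial.coeff_X_mul' (Finsupp.single i 1 + m) i f]
    have hmem : i ∈ (Finsupp.single i 1 + m : Fin r →₀ ℕ).support := by
      rw [Finsupp.mem_support_iff]
      simp
    rw [if_pos hmem]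
    rw [add_comm]
    congr 1
    ext j
    simp
  rw [h1, add_comm (Finsupp.single i 1) m, fact_add_single]
  ring

lemma apolar_homogeneousComponent (n : ℕ) (f g : MvPolynomial (Fin r) ℂ) :
    apolar (homogeneousComponent n f) g = apolar f (homogeneousComponent n g) := by
  have hsupp : (homogeneousComponent n f).support ⊆ f.support := by
    intro m hm
    rw [MvPolynomial.mem_support_iff, coeff_homogeneousComponent] at hm
    rw [MvPolynomial.mem_support_iff]
    intro h
    apply hm
    rw [h, ite_self]
  rw [apolar_eq_of_subset hsupp, apolar]
  refine Finset.sum_congr rfl fun m _ => ?_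
  rw [coeff_homogeneousComponent, coeff_homogeneousComponent]
  by_cases h : m.degree = n
  · rw [if_pos h, if_pos h]
  · rw [if_neg h, if_neg h]; ring

noncomputable def Dv (v : Fin r → ℂ) : Module.End ℂ (MvPolynomial (Fin r) ℂ) :=
  ∑ i : Fin r, v i • (pderiv i : Derivation ℂ (MvPolynomial (Fin r) ℂ) _).toLinearMap

lemma Dv_apply (v : Fin r → ℂ) (g : MvPolynomial (Fin r) ℂ) :
    Dv v g = ∑ i : Fin r, v i • pderiv i g := by
  simp [Dv]

lemma degree_add_single (d : Fin r →₀ ℕ) (i : Fin r) :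
    (d + Finsupp.single i 1).degree = d.degree + 1 := by
  have h : ∀ e : Fin r →₀ ℕ, e.degree = e.sum fun _ n => n := fun e => rfl
  rw [h, h, Finsupp.sum_add_index' (fun _ => rfl) (fun _ _ _ => rfl), Finsupp.sum_single_index rfl]

lemma sum_eq_degree (d : Fin r →₀ ℕ) : (d.sum fun _ n => n) = d.degree := rfl

lemma totalDegree_pderiv_le (i : Fin r) (g : MvPolynomial (Fin r) ℂ) :
    (pderiv i g).totalDegree ≤ g.totalDegree - 1 := by
  rw [MvPolynomial.totalDegree]
  refine Finset.sup_le fun m hm => ?_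
  rw [MvPolynomial.mem_support_iff, coeff_pderiv] at hm
  have h2 : coeff (m + Finsupp.single i 1) g ≠ 0 := right_ne_zero_of_mul hm
  have h3 := MvPolynomial.le_totalDegree (MvPolynomial.mem_support_iff.mpr h2)
  rw [sum_eq_degree, degree_add_single] at h3
  rw [sum_eq_degree]
  omega

lemma totalDegree_Dv_le (v : Fin r → ℂ) (g : MvPolynomial (Fin r) ℂ) :
    (Dv v g).totalDegree ≤ g.totalDegree - 1 := by
  rw [Dv_apply]
  refine MvPolynomial.totalDegree_finsetSum_le fun i _ => ?_
  exact (MvPolynomial.totalDegree_smul_le _ _).trans (totalDegree_pderiv_le i g)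

lemma pderiv_eq_zero_of_totalDegree_eq_zero {g : MvPolynomial (Fin r) ℂ}
    (h : g.totalDegree = 0) (i : Fin r) : pderiv i g = 0 := by
  ext m
  rw [coeff_pderiv, MvPolynomial.coeff_zero]
  have : coeff (m + Finsupp.single i 1) g = 0 := by
    apply MvPolynomial.coeff_eq_zero_of_totalDegree_lt
    rw [h]
    have := degree_add_single m i
    have h2 : (∑ j ∈ (m + Finsupp.single i 1 : Fin r →₀ ℕ).support, (m + Finsupp.single i 1 : Fin r →₀ ℕ) j)
        = (m + Finsupp.single i 1 : Fin r →₀ ℕ).degree := rfl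
    omega
  rw [this, mul_zero]

lemma Dv_pow_eq_zero (v : Fin r → ℂ) :
    ∀ (n : ℕ) (f : MvPolynomial (Fin r) ℂ), f.totalDegree ≤ n → ((Dv v) ^ (n + 1)) f = 0 := by
  intro n
  induction n with
  | zero =>
    intro f hf
    rw [pow_one, Dv_apply]
    refine Finset.sum_eq_zero fun i _ => ?_
    rw [pderiv_eq_zero_of_totalDegree_eq_zero (Nat.le_zero.mp hf) i, smul_zero]
  | succ n ih =>
    intro f hf
    rw [pow_succ, Module.End.mul_apply]
    exact ih (Dv v f) (by have := totalDegree_Dv_le v f; omega)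

lemma Dv_pow_eq_zero' (v : Fin r → ℂ) {f : MvPolynomial (Fin r) ℂ} {N k : ℕ}
    (hf : f.totalDegree ≤ N) (hk : N < k) : ((Dv v) ^ k) f = 0 := by
  have hdecomp : (Dv v) ^ k = (Dv v) ^ (k - (N + 1)) * (Dv v) ^ (N + 1) := by
    rw [← pow_add]
    congr 1
    omega
  rw [hdecomp, Module.End.mul_apply, Dv_pow_eq_zero v N f hf, map_zero]

lemma sum_Dv_ext (v : Fin r → ℂ) (c : ℕ → ℂ) {f : MvPolynomial (Fin r) ℂ} {N M : ℕ}
    (hf : f.totalDegree ≤ N) (hNM : N ≤ M) :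
    ∑ k ∈ Finset.range (M + 1), c k • ((Dv v) ^ k) f
      = ∑ k ∈ Finset.range (N + 1), c k • ((Dv v) ^ k) f := by
  refine (Finset.sum_subset (Finset.range_subset_range.mpr (by omega)) fun k _ hk => ?_).symm
  rw [Finset.mem_range, not_lt] at hk
  rw [Dv_pow_eq_zero' v hf (by omega), smul_zero]

lemma Dv_C (v : Fin r → ℂ) (a : ℂ) : Dv v (C a) = 0 := by
  rw [Dv_apply]
  refine Finset.sum_eq_zero fun i _ => ?_
  rw [pderiv_C, smul_zero]

lemma Dv_mul_X (v : Fin r → ℂ) (p : MvPolynomial (Fin r) ℂ) (i : Fin r) :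
    Dv v (p * X i) = Dv v p * X i + v i • p := by
  rw [Dv_apply, Dv_apply]
  have h : ∀ l : Fin r, v l • pderiv l (p * X i)
      = v l • pderiv l p * X i + v l • (p * pderiv l (X i)) := by
    intro l
    rw [pderiv_mul, smul_add, smul_mul_assoc]
  rw [Finset.sum_congr rfl fun l _ => h l, Finset.sum_add_distrib, ← Finset.sum_mul]
  congr 1
  rw [Finset.sum_eq_single i]
  · rw [pderiv_X_self, mul_one]
  · intro l _ hl
    rw [pderiv_X_of_ne (Ne.symm hl), mul_zero, smul_zero]
  · intro h; exact absurd (Finset.mem_univ i) h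

lemma Dv_succ_apply (v : Fin r → ℂ) (k : ℕ) (x : MvPolynomial (Fin r) ℂ) :
    ((Dv v) ^ (k + 1)) x = Dv v (((Dv v) ^ k) x) := by
  conv_lhs => rw [pow_succ']
  rfl

lemma Dv_pow_mul_X (v : Fin r → ℂ) (p : MvPolynomial (Fin r) ℂ) (i : Fin r) :
    ∀ j : ℕ, ((Dv v) ^ (j + 1)) (p * X i)
      = (((Dv v) ^ (j + 1)) p) * X i + (((j : ℂ) + 1) * v i) • (((Dv v) ^ j) p) := by
  intro j
  induction j with
  | zero =>
    simp only [zero_add, pow_one, pow_zero, Module.End.one_apply, Nat.cast_zero, one_mul]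
    exact Dv_mul_X v p i
  | succ j ih =>
    rw [Dv_succ_apply, ih, map_add, LinearMap.map_smul, Dv_mul_X,
      ← Dv_succ_apply, ← Dv_succ_apply]
    push_cast
    module

theorem taylor_exp (v : Fin r → ℂ) (f : MvPolynomial (Fin r) ℂ) :
    ∀ N : ℕ, f.totalDegree ≤ N →
      (aeval (fun i => X i + C (v i)) f : MvPolynomial (Fin r) ℂ)
        = ∑ k ∈ Finset.range (N + 1), ((Nat.factorial k : ℂ))⁻¹ • ((Dv v) ^ k) f := by
  induction f using MvPolynomial.induction_on with
  | C a =>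
    intro N _
    rw [aeval_C, Finset.sum_range_succ']
    have hz : ∀ k : ℕ, ((Dv v) ^ (k + 1)) (C a) = 0 := fun k => by
      rw [pow_succ, Module.End.mul_apply, Dv_C, map_zero]
    simp only [hz, smul_zero, Finset.sum_const_zero, zero_add, pow_zero, Module.End.one_apply,
      Nat.factorial_zero, Nat.cast_one, inv_one, one_smul]
    rfl
  | add p q hp hq =>
    intro N hN
    set M := max N (max p.totalDegree q.totalDegree) with hM
    rw [map_add, hp M (by omega), hq M (by omega), ← Finset.sum_add_distrib]
    have : ∀ k ∈ Finset.range (M + 1),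
        (Nat.factorial k : ℂ)⁻¹ • ((Dv v) ^ k) p + (Nat.factorial k : ℂ)⁻¹ • ((Dv v) ^ k) q
          = (Nat.factorial k : ℂ)⁻¹ • ((Dv v) ^ k) (p + q) := fun k _ => by
      rw [map_add, smul_add]
    rw [Finset.sum_congr rfl this, sum_Dv_ext v _ hN (by omega)]
  | mul_X p i hp =>
    intro N hN
    have hdeg : (p * X i).totalDegree ≤ p.totalDegree + 1 := by
      refine (MvPolynomial.totalDegree_mul _ _).trans ?_
      rw [MvPolynomial.totalDegree_X]
    set M := p.totalDegree with hM
    have key : (aeval (fun i => X i + C (v i)) (p * X i) : MvPolynomial (Fin r) ℂ)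
        = ∑ k ∈ Finset.range (M + 2), ((Nat.factorial k : ℂ))⁻¹ • ((Dv v) ^ k) (p * X i) := by
      rw [map_mul, hp M le_rfl, Finset.sum_range_succ' _ (M + 1)]
      have hsub : ∀ j ∈ Finset.range (M + 1),
          (Nat.factorial (j + 1) : ℂ)⁻¹ • ((Dv v) ^ (j + 1)) (p * X i)
            = (Nat.factorial (j + 1) : ℂ)⁻¹ • ((((Dv v) ^ (j + 1)) p) * X i)
              + (Nat.factorial j : ℂ)⁻¹ • (v i • (((Dv v) ^ j) p)) := by
        intro j _
        rw [Dv_pow_mul_X, smul_add, smul_smul, smul_smul]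
        have hscal : ((Nat.factorial (j + 1) : ℂ))⁻¹ * (((j : ℂ) + 1) * v i)
            = ((Nat.factorial j : ℂ))⁻¹ * v i := by
          have h0 : (Nat.factorial j : ℂ) ≠ 0 := Nat.cast_ne_zero.mpr (Nat.factorial_ne_zero j)
          have h1 : ((j : ℂ) + 1) ≠ 0 := by
            have h2 : ((j + 1 : ℕ) : ℂ) ≠ 0 := Nat.cast_ne_zero.mpr (Nat.succ_ne_zero j)
            push_cast at h2
            exact h2
          rw [Nat.factorial_succ]
          push_cast
          field_simp
        rw [hscal]
      rw [Finset.sum_congr rfl hsub, Finset.sum_add_distrib]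
      have h1 : ∑ j ∈ Finset.range (M + 1),
          (Nat.factorial (j + 1) : ℂ)⁻¹ • ((((Dv v) ^ (j + 1)) p) * X i)
            + (Nat.factorial 0 : ℂ)⁻¹ • ((Dv v) ^ 0) (p * X i)
          = (∑ k ∈ Finset.range (M + 2), (Nat.factorial k : ℂ)⁻¹ • ((Dv v) ^ k) p) * X i := by
      -- ∑_{k∈range(M+2)} = term0 + shift
        rw [Finset.sum_range_succ' _ (M + 1), add_mul, Finset.sum_mul]
        congr 1
        · exact Finset.sum_congr rfl fun j _ => by rw [smul_mul_assoc]
        · simp [smul_mul_assoc]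
      have h2 : ∑ j ∈ Finset.range (M + 1),
            (Nat.factorial j : ℂ)⁻¹ • (v i • (((Dv v) ^ j) p))
          = v i • ∑ j ∈ Finset.range (M + 1), (Nat.factorial j : ℂ)⁻¹ • ((Dv v) ^ j) p := by
        rw [Finset.smul_sum]
        exact Finset.sum_congr rfl fun j _ => smul_comm _ _ _
      have hS : (∑ k ∈ Finset.range (M + 2), (Nat.factorial k : ℂ)⁻¹ • ((Dv v) ^ k) p)
          = ∑ k ∈ Finset.range (M + 1), (Nat.factorial k : ℂ)⁻¹ • ((Dv v) ^ k) p := by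
        rw [show (M + 2) = (M + 1) + 1 from rfl]
        exact sum_Dv_ext v _ le_rfl (by omega)
      rw [aeval_X, add_right_comm, h1, h2, hS, mul_add, smul_eq_C_mul]
      ring
    rw [key]
    rw [show (M + 2) = (M + 1) + 1 from rfl]
    rw [← sum_Dv_ext v (fun k => (Nat.factorial k : ℂ)⁻¹)
        (hdeg.trans (le_refl (M + 1))) (le_max_right N (M + 1)),
      sum_Dv_ext v _ hN (le_max_left N (M + 1))]

lemma mem_homog_iff_degree (p : MvPolynomial (Fin r) ℂ) (n : ℕ) :
    p ∈ homogeneousSubmodule (Fin r) ℂ n ↔ ∀ d, coeff d p ≠ 0 → d.degree = n := by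
  rw [mem_homogeneousSubmodule]
  constructor
  · intro h d hd
    have := h hd
    rwa [Finsupp.degree_eq_weight_one]
  · intro h d hd
    have := h d hd
    rwa [Finsupp.degree_eq_weight_one] at this

lemma pderiv_mem_homog {f : MvPolynomial (Fin r) ℂ} {n : ℕ}
    (hf : f ∈ homogeneousSubmodule (Fin r) ℂ n) (i : Fin r) :
    pderiv i f ∈ homogeneousSubmodule (Fin r) ℂ (n - 1) := by
  rw [mem_homog_iff_degree] at hf ⊢
  intro d hd
  rw [coeff_pderiv] at hd
  have h2 : coeff (d + Finsupp.single i 1) f ≠ 0 := right_ne_zero_of_mul hd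
  have h3 := hf _ h2
  rw [degree_add_single] at h3
  omega

lemma Dv_mem_homog {f : MvPolynomial (Fin r) ℂ} {n : ℕ}
    (hf : f ∈ homogeneousSubmodule (Fin r) ℂ n) (v : Fin r → ℂ) :
    Dv v f ∈ homogeneousSubmodule (Fin r) ℂ (n - 1) := by
  rw [Dv_apply]
  exact Submodule.sum_mem _ fun i _ => Submodule.smul_mem _ _ (pderiv_mem_homog hf i)

lemma Dv_pow_mem_homog {f : MvPolynomial (Fin r) ℂ} {n : ℕ}
    (hf : f ∈ homogeneousSubmodule (Fin r) ℂ n) (v : Fin r → ℂ) (k : ℕ) :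
    ((Dv v) ^ k) f ∈ homogeneousSubmodule (Fin r) ℂ (n - k) := by
  induction k with
  | zero => rw [pow_zero]; exact hf
  | succ k ih =>
    rw [Dv_succ_apply]
    have := Dv_mem_homog ih v
    rwa [Nat.sub_sub] at this

lemma Dv_indicator (i : Fin r) (x : MvPolynomial (Fin r) ℂ) :
    Dv (fun l => if l = i then (1 : ℂ) else 0) x = pderiv i x := by
  rw [Dv_apply, Finset.sum_eq_single i]
  · rw [if_pos rfl, one_smul]
  · intro l _ hl
    rw [if_neg hl, zero_smul]
  · intro h; exact absurd (Finset.mem_univ i) h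

/-- If `S` is graded and closed under translation, it is closed under partial derivatives. -/
lemma pderiv_mem_of_translate {S : Submodule ℂ (MvPolynomial (Fin r) ℂ)}
    (hgraded : ∀ f ∈ S, ∀ n : ℕ, homogeneousComponent n f ∈ S)
    (hT : ∀ f ∈ S, ∀ v : Fin r → ℂ,
        (aeval (fun i => X i + C (v i)) f : MvPolynomial (Fin r) ℂ) ∈ S)
    {g : MvPolynomial (Fin r) ℂ} (hg : g ∈ S) (i : Fin r) : pderiv i g ∈ S := by
  have hdecomp : pderiv i g
      = ∑ d ∈ Finset.range (g.totalDegree + 1), pderiv i (homogeneousComponent d g) := by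
    conv_lhs => rw [← MvPolynomial.sum_homogeneousComponent g]
    rw [map_sum]
  rw [hdecomp]
  refine Submodule.sum_mem _ fun d _ => ?_
  set gd := homogeneousComponent d g with hgd
  have hgdS : gd ∈ S := hgraded g hg d
  have hgdH : gd ∈ homogeneousSubmodule (Fin r) ℂ d := homogeneousComponent_isHomogeneous d g
  match d with
  | 0 =>
    have h0 : gd.totalDegree = 0 :=
      Nat.le_zero.mp (IsHomogeneous.totalDegree_le hgdH)
    rw [pderiv_eq_zero_of_totalDegree_eq_zero h0 i]
    exact Submodule.zero_mem S
  | (j + 1) =>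
    set v : Fin r → ℂ := fun l => if l = i then (1 : ℂ) else 0 with hv
    have hdeg : gd.totalDegree ≤ j + 1 := IsHomogeneous.totalDegree_le hgdH
    have htay := taylor_exp v gd (j + 1) hdeg
    have hES : (aeval (fun l => X l + C (v l)) gd : MvPolynomial (Fin r) ℂ) ∈ S := hT gd hgdS v
    have hcomp : homogeneousComponent j ((aeval (fun l => X l + C (v l)) gd :
        MvPolynomial (Fin r) ℂ)) = pderiv i gd := by
      rw [htay, map_sum]
      have hterm : ∀ k ∈ Finset.range (j + 2),
          homogeneousComponent j ((Nat.factorial k : ℂ)⁻¹ • ((Dv v) ^ k) gd)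
            = if k = 1 then pderiv i gd else 0 := by
        intro k hk
        rw [Finset.mem_range] at hk
        rw [LinearMap.map_smul]
        have hmem := Dv_pow_mem_homog hgdH v k
        rw [homogeneousComponent_of_mem hmem]
        by_cases h1 : k = 1
        · subst h1
          rw [if_pos (by omega), if_pos rfl, pow_one, Dv_indicator]
          norm_num
        · rw [if_neg (by omega), smul_zero, if_neg h1]
      rw [Finset.sum_congr rfl hterm, Finset.sum_ite_eq' (Finset.range (j + 2)) 1
        (fun _ => pderiv i gd), if_pos (by simp)]
    rw [← hcomp]
    exact hgraded _ hES j

instance homog_findim (n : ℕ) :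
    FiniteDimensional ℂ (homogeneousSubmodule (Fin r) ℂ n) := by
  refine Submodule.finiteDimensional_of_le (S₂ := restrictTotalDegree (Fin r) ℂ n) ?_
  intro p hp
  rw [MvPolynomial.mem_restrictTotalDegree]
  exact IsHomogeneous.totalDegree_le hp

/-- The apolar pairing restricted to the degree-`n` homogeneous part. -/
noncomputable def apolarForm (r n : ℕ) :
    LinearMap.BilinForm ℂ (homogeneousSubmodule (Fin r) ℂ n) :=
  LinearMap.mk₂ ℂ (fun x y => apolar x.1 y.1)
    (fun x x' y => by
      show apolar ((x : MvPolynomial (Fin r) ℂ) + (x' : MvPolynomial (Fin r) ℂ)) (y : MvPolynomial (Fin r) ℂ) = _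
      exact apolar_add_left _ _ _)
    (fun a x y => by
      show apolar (a • (x : MvPolynomial (Fin r) ℂ)) (y : MvPolynomial (Fin r) ℂ) = _
      rw [apolar_smul_left]; rfl)
    (fun x y y' => by
      show apolar (x : MvPolynomial (Fin r) ℂ) ((y : MvPolynomial (Fin r) ℂ) + (y' : MvPolynomial (Fin r) ℂ)) = _
      rw [apolar_comm, apolar_add_left, apolar_comm (y : MvPolynomial (Fin r) ℂ) x.1,
        apolar_comm (y' : MvPolynomial (Fin r) ℂ) x.1])
    (fun a x y => by
      show apolar (x : MvPolynomial (Fin r) ℂ) (a • (y : MvPolynomial (Fin r) ℂ)) = _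
      rw [apolar_comm, apolar_smul_left, apolar_comm (y : MvPolynomial (Fin r) ℂ) x.1]; rfl)

lemma apolarForm_apply {n : ℕ} (x y : homogeneousSubmodule (Fin r) ℂ n) :
    apolarForm r n x y = apolar x.1 y.1 := rfl

lemma apolarForm_isRefl (n : ℕ) : (apolarForm r n).IsRefl := by
  intro x y h
  rw [apolarForm_apply, apolar_comm]
  exact h

lemma fact_prod_ne_zero (m : Fin r →₀ ℕ) :
    (m.prod fun _ k => (Nat.factorial k : ℂ)) ≠ 0 := by
  refine Finset.prod_ne_zero_iff.mpr fun i _ => ?_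
  exact Nat.cast_ne_zero.mpr (Nat.factorial_ne_zero _)

lemma apolarForm_nondeg (n : ℕ) : (apolarForm r n).Nondegenerate := by
  suffices hL : LinearMap.SeparatingLeft (apolarForm r n) from
    ⟨hL, fun y hy => hL y fun x => by rw [apolarForm_apply, apolar_comm]; exact hy x⟩
  intro x hx
  have hx1 : (x : MvPolynomial (Fin r) ℂ) = 0 := by
    by_contra hne
    obtain ⟨m, hm⟩ := MvPolynomial.ne_zero_iff.mp hne
    have hdeg : m.degree = n := (mem_homog_iff_degree _ n).mp x.2 m hm
    have hy : (monomial m 1 : MvPolynomial (Fin r) ℂ) ∈ homogeneousSubmodule (Fin r) ℂ n :=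
      isHomogeneous_monomial 1 hdeg
    have h0 := hx ⟨monomial m 1, hy⟩
    rw [apolarForm_apply] at h0
    simp only at h0
    rw [apolar_monomial_right] at h0
    exact (mul_ne_zero (mul_ne_zero hm one_ne_zero) (fact_prod_ne_zero m)) h0
  exact ZeroMemClass.coe_eq_zero.mp hx1

/-- If `S^⊥` is an ideal, then `S` is closed under partial derivatives. -/
lemma pderiv_mem_of_ideal {S : Submodule ℂ (MvPolynomial (Fin r) ℂ)}
    (hgraded : ∀ f ∈ S, ∀ n : ℕ, homogeneousComponent n f ∈ S)
    (I : Ideal (MvPolynomial (Fin r) ℂ))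
    (hI : ∀ f, f ∈ I ↔ ∀ g ∈ S, apolar f g = 0)
    {g : MvPolynomial (Fin r) ℂ} (hg : g ∈ S) (i : Fin r) : pderiv i g ∈ S := by
  have key : ∀ n : ℕ, homogeneousComponent n (pderiv i g) ∈ S := by
    intro n
    set V := homogeneousSubmodule (Fin r) ℂ n with hV
    set U : Submodule ℂ V := S.comap V.subtype with hU
    set p := homogeneousComponent n (pderiv i g) with hp
    have hpV : p ∈ V := homogeneousComponent_isHomogeneous n _
    suffices hsuf : (⟨p, hpV⟩ : V) ∈ U by
      simpa [hU, Submodule.mem_comap] using hsuf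
    rw [← LinearMap.BilinForm.orthogonal_orthogonal (apolarForm_nondeg n)
      (apolarForm_isRefl n) U]
    rw [LinearMap.BilinForm.mem_orthogonal_iff]
    intro x hx
    have hxS : ∀ h ∈ S, apolar (x : MvPolynomial (Fin r) ℂ) h = 0 := by
      intro h hh
      have h1 : homogeneousComponent n h ∈ S := hgraded h hh n
      have h2 : (⟨homogeneousComponent n h, homogeneousComponent_isHomogeneous n h⟩ : V) ∈ U := by
        simpa [hU, Submodule.mem_comap] using h1
      have h3 := hx _ h2
      rw [apolarForm_apply] at h3
      have hxfix : homogeneousComponent n (x : MvPolynomial (Fin r) ℂ)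
          = (x : MvPolynomial (Fin r) ℂ) := by
        rw [homogeneousComponent_of_mem x.2, if_pos rfl]
      calc apolar (x : MvPolynomial (Fin r) ℂ) h
          = apolar (homogeneousComponent n (x : MvPolynomial (Fin r) ℂ)) h := by rw [hxfix]
        _ = apolar (x : MvPolynomial (Fin r) ℂ) (homogeneousComponent n h) := by
            rw [apolar_homogeneousComponent]
        _ = apolar (homogeneousComponent n h) (x : MvPolynomial (Fin r) ℂ) := apolar_comm _ _
        _ = 0 := h3
    have hxI : (x : MvPolynomial (Fin r) ℂ) ∈ I := (hI _).mpr hxS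
    have hXxI : X i * (x : MvPolynomial (Fin r) ℂ) ∈ I := I.mul_mem_left (X i) hxI
    have h4 : apolar (X i * (x : MvPolynomial (Fin r) ℂ)) g = 0 := (hI _).mp hXxI g hg
    rw [apolar_X_mul] at h4
    rw [apolarForm_apply]
    have hxfix : homogeneousComponent n (x : MvPolynomial (Fin r) ℂ)
        = (x : MvPolynomial (Fin r) ℂ) := by
      rw [homogeneousComponent_of_mem x.2, if_pos rfl]
    calc apolar (x : MvPolynomial (Fin r) ℂ) p
        = apolar (homogeneousComponent n (x : MvPolynomial (Fin r) ℂ)) (pderiv i g) := by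
          rw [hp, apolar_homogeneousComponent]
      _ = apolar (x : MvPolynomial (Fin r) ℂ) (pderiv i g) := by rw [hxfix]
      _ = 0 := h4
  conv_lhs => skip
  rw [← MvPolynomial.sum_homogeneousComponent (pderiv i g)]
  exact Submodule.sum_mem _ fun d _ => key d

/-- For a graded subspace `S ⊆ Sym L^*`, the space
`S^⊥ = {f ∈ Sym L : (f ⊙ g)(0) = 0 for all g ∈ S}` is a homogeneous ideal
if and only if `S` is closed under translation. -/
theorem stmt0 (r : ℕ) (S : Submodule ℂ (MvPolynomial (Fin r) ℂ))
    (hgraded : ∀ f ∈ S, ∀ n : ℕ, homogeneousComponent n f ∈ S) :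
    (∃ I : Ideal (MvPolynomial (Fin r) ℂ),
        (∀ f, f ∈ I ↔ ∀ g ∈ S, apolar f g = 0) ∧
        (∀ f ∈ I, ∀ n : ℕ, homogeneousComponent n f ∈ I)) ↔
    (∀ f ∈ S, ∀ v : Fin r → ℂ,
        (aeval (fun i => X i + C (v i)) f : MvPolynomial (Fin r) ℂ) ∈ S) := by
  constructor
  · rintro ⟨I, hI, -⟩ f hf v
    have hpd : ∀ g ∈ S, ∀ i : Fin r, pderiv i g ∈ S :=
      fun g hg i => pderiv_mem_of_ideal hgraded I hI hg i
    have hDv : ∀ (w : Fin r → ℂ) (x), x ∈ S → Dv w x ∈ S := by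
      intro w x hx
      rw [Dv_apply]
      exact Submodule.sum_mem _ fun i _ => Submodule.smul_mem _ _ (hpd x hx i)
    have hDvPow : ∀ (k : ℕ) (x), x ∈ S → ((Dv v) ^ k) x ∈ S := by
      intro k
      induction k with
      | zero => intro x hx; rwa [pow_zero, Module.End.one_apply]
      | succ k ih =>
        intro x hx
        rw [Dv_succ_apply]
        exact hDv v _ (ih x hx)
    rw [taylor_exp v f f.totalDegree le_rfl]
    exact Submodule.sum_mem _ fun k _ => Submodule.smul_mem _ _ (hDvPow k f hf)
  · intro hT
    have hpd : ∀ g ∈ S, ∀ i : Fin r, pderiv i g ∈ S :=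
      fun g hg i => pderiv_mem_of_translate hgraded hT hg i
    have hmul : ∀ c f : MvPolynomial (Fin r) ℂ, (∀ g ∈ S, apolar f g = 0) →
        ∀ g ∈ S, apolar (c * f) g = 0 := by
      intro c
      induction c using MvPolynomial.induction_on with
      | C a =>
        intro f hf g hg
        rw [← smul_eq_C_mul, apolar_smul_left, hf g hg, mul_zero]
      | add c c' hc hc' =>
        intro f hf g hg
        rw [add_mul, apolar_add_left, hc f hf g hg, hc' f hf g hg, add_zero]
      | mul_X c i hc =>
        intro f hf g hg
        have hre : c * X i * f = X i * (c * f) := by ring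
        rw [hre, apolar_X_mul]
        exact hc f hf (pderiv i g) (hpd g hg i)
    refine ⟨{ carrier := {f | ∀ g ∈ S, apolar f g = 0}
              zero_mem' := fun g _ => apolar_zero_left g
              add_mem' := fun {a b} ha hb g hg => by
                rw [apolar_add_left, ha g hg, hb g hg, add_zero]
              smul_mem' := fun c f hf => by
                simp only [Set.mem_setOf_eq, smul_eq_mul] at hf ⊢
                exact hmul c f hf }, fun f => Iff.rfl, ?_⟩
    · intro f hf n g hg
      show apolar (homogeneousComponent n f) g = 0
      rw [apolar_homogeneousComponent]
      exact hf (homogeneousComponent n g) (hgraded g hg n)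
end

section
/- For a bihomogeneous element f ∈ Ψ_L of bidegree (a,b), the adjoint of left multiplication by f on Ψ_L, with respect to the constant-term pairing between Ψ_L and Ψ_{L^*}, is given on the bigraded component Ψ_{L^*}^{c,d} by (−1)^{b(d−b)} f ⊙ − : Ψ_{L^*}^{c,d} → Ψ_{L^*}^{c−a,d−b}. -/
open MvPolynomial

/-- Model of the superspace ring `Ψ = ℂ[x₁,…,x_r] ⊗ Λ(dx₁,…,dx_r)`: an element is the
family of its coefficients, `ω S` being the polynomial coefficient of `dx_S`
(`dx_S = dx_{i₁} ∧ ⋯ ∧ dx_{i_b}` with `i₁ < ⋯ < i_b` the elements of `S`). -/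
abbrev SupSp (r : ℕ) : Type := Finset (Fin r) → MvPolynomial (Fin r) ℂ

/-- Contraction `ι_{e_i}` against the `i`-th coordinate vector. -/
noncomputable def contrOne {r : ℕ} (i : Fin r) (ω : SupSp r) : SupSp r :=
  fun S => if i ∈ S then 0
    else ((-1 : ℂ) ^ (S.filter (fun t => t < i)).card) • ω (insert i S)

/-- The composite contraction `ι_{e_{i₁}} ∘ ⋯ ∘ ι_{e_{i_b}}` for `S = {i₁ < ⋯ < i_b}`. -/
noncomputable def iotaSet {r : ℕ} (S : Finset (Fin r)) (ω : SupSp r) : SupSp r :=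
  (S.sort (· ≤ ·)).foldr (fun i acc => contrOne i acc) ω

/-- The constant-coefficient differential operator `∂^m` applied to a polynomial. -/
noncomputable def derivMon {r : ℕ} (m : Fin r →₀ ℕ) (p : MvPolynomial (Fin r) ℂ) :
    MvPolynomial (Fin r) ℂ :=
  ∑ m' ∈ p.support,
    (p.coeff m' * ∏ i ∈ m.support, ((m' i).descFactorial (m i) : ℂ)) •
      monomial (m' - m) (1 : ℂ)

/-- The action `⊙` of `Ψ_L` on `Ψ_{L^*}`: the basis element `e^m de_S` acts as
`∂^m ∘ ι_{e_{i₁}} ∘ ⋯ ∘ ι_{e_{i_b}}`. -/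
noncomputable def odot {r : ℕ} (f g : SupSp r) : SupSp r :=
  ∑ S : Finset (Fin r), ∑ m ∈ (f S).support,
    ((f S).coeff m) • ((fun T => derivMon m (iotaSet S g T)) : SupSp r)

/-- The pairing `Ψ_L × Ψ_{L^*} → ℂ`, `(f,g) ↦` constant term of `f ⊙ g`. -/
noncomputable def spair {r : ℕ} (f g : SupSp r) : ℂ :=
  coeff 0 (odot f g (∅ : Finset (Fin r)))

/-- Supercommutative multiplication on the superspace ring. -/
noncomputable def smul' {r : ℕ} (f g : SupSp r) : SupSp r :=
  fun S => ∑ T ∈ S.powerset,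
    ((-1 : ℂ) ^ (∑ i ∈ T, ((S \ T).filter (fun j => j < i)).card)) • (f T * g (S \ T))

/-- Bihomogeneity of bidegree `(a,b)` (commutative degree `a`, anticommutative degree `b`). -/
def BiHom {r : ℕ} (a b : ℕ) (ω : SupSp r) : Prop :=
  ∀ S : Finset (Fin r), (S.card = b → (ω S).IsHomogeneous a) ∧ (S.card ≠ b → ω S = 0)

/-- The exterior derivative `d`. -/
noncomputable def extd {r : ℕ} (ω : SupSp r) : SupSp r :=
  fun S => ∑ j ∈ S,
    ((-1 : ℂ) ^ (S.filter (fun t => t < j)).card) • (pderiv j (ω (S.erase j)) : MvPolynomial (Fin r) ℂ)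

/-- Contraction `ι_𝓔` with the Euler vector field `𝓔 = ∑ xᵢ eᵢ`. -/
noncomputable def iotaE {r : ℕ} (ω : SupSp r) : SupSp r :=
  fun S => ∑ i ∈ Sᶜ,
    ((-1 : ℂ) ^ (S.filter (fun t => t < i)).card) • (X i * ω (insert i S))

lemma coeff_derivMon {r : ℕ} (m : Fin r →₀ ℕ) (p : MvPolynomial (Fin r) ℂ) (μ : Fin r →₀ ℕ) :
    coeff μ (derivMon m p) =
      coeff (μ + m) p * ∏ i ∈ m.support, (((μ + m) i).descFactorial (m i) : ℂ) := by
  unfold derivMon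
  rw [coeff_sum]
  simp only [coeff_smul, coeff_monomial, smul_eq_mul]
  have key : ∀ b : Fin r →₀ ℕ, b ≠ μ + m →
      (coeff b p * ∏ i ∈ m.support, ((b i).descFactorial (m i) : ℂ)) *
        (if b - m = μ then (1:ℂ) else 0) = 0 := by
    intro b hb
    by_cases hbm : b - m = μ
    · have : ∃ i, b i < m i := by
        by_contra hc
        push_neg at hc
        exact hb (by
          have hle : m ≤ b := Finsupp.le_def.mpr hc
          have h2 := tsub_add_cancel_of_le hle
          rw [hbm] at h2
          exact h2.symm)
      obtain ⟨i, hi⟩ := this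
      have him : i ∈ m.support := Finsupp.mem_support_iff.mpr (by omega)
      rw [Finset.prod_eq_zero him (by rw [Nat.descFactorial_eq_zero_iff_lt.mpr hi]; simp)]
      ring
    · rw [if_neg hbm, mul_zero]
  by_cases hmem : μ + m ∈ p.support
  · rw [Finset.sum_eq_single_of_mem _ hmem (fun b _ hb => key b hb),
      if_pos (add_tsub_cancel_right μ m), mul_one]
  · rw [Finset.sum_eq_zero (fun b hb => key b (fun e => hmem (e ▸ hb))),
      notMem_support_iff.mp hmem, zero_mul]

noncomputable def dop {r : ℕ} (p w : MvPolynomial (Fin r) ℂ) : MvPolynomial (Fin r) ℂ :=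
  ∑ m ∈ p.support, coeff m p • derivMon m w

lemma derivMon_zero {r : ℕ} (m : Fin r →₀ ℕ) : derivMon m (0 : MvPolynomial (Fin r) ℂ) = 0 := by
  ext μ; simp [coeff_derivMon]

lemma derivMon_add {r : ℕ} (m : Fin r →₀ ℕ) (w₁ w₂ : MvPolynomial (Fin r) ℂ) :
    derivMon m (w₁ + w₂) = derivMon m w₁ + derivMon m w₂ := by
  ext μ; simp [coeff_derivMon, coeff_add, add_mul]

lemma derivMon_smul {r : ℕ} (m : Fin r →₀ ℕ) (c : ℂ) (w : MvPolynomial (Fin r) ℂ) :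
    derivMon m (c • w) = c • derivMon m w := by
  ext μ; simp [coeff_derivMon, coeff_smul]; ring

lemma dop_zero_right {r : ℕ} (p : MvPolynomial (Fin r) ℂ) : dop p 0 = 0 := by
  simp [dop, derivMon_zero]

lemma dop_add_right {r : ℕ} (p w₁ w₂ : MvPolynomial (Fin r) ℂ) :
    dop p (w₁ + w₂) = dop p w₁ + dop p w₂ := by
  simp [dop, derivMon_add, smul_add, Finset.sum_add_distrib]

lemma dop_smul_right {r : ℕ} (p : MvPolynomial (Fin r) ℂ) (c : ℂ) (w : MvPolynomial (Fin r) ℂ) :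
    dop p (c • w) = c • dop p w := by
  simp [dop, derivMon_smul, Finset.smul_sum, smul_comm c]

lemma dop_zero_left {r : ℕ} (w : MvPolynomial (Fin r) ℂ) : dop 0 w = 0 := by
  simp [dop]

lemma dop_def' {r : ℕ} (p w : MvPolynomial (Fin r) ℂ) :
    dop p w = (AddMonoidAlgebra.coeff p).sum (fun m c => c • derivMon m w) := rfl

lemma dop_add_left {r : ℕ} (p q w : MvPolynomial (Fin r) ℂ) :
    dop (p + q) w = dop p w + dop q w := by
  rw [dop_def', dop_def', dop_def', AddMonoidAlgebra.coeff_add]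
  exact Finsupp.sum_add_index' (fun a => zero_smul _ _) (fun a b₁ b₂ => add_smul _ _ _)

lemma dop_monomial_left {r : ℕ} (m : Fin r →₀ ℕ) (c : ℂ) (w : MvPolynomial (Fin r) ℂ) :
    dop (monomial m c) w = c • derivMon m w := by
  rw [dop_def']
  exact sum_monomial_eq (zero_smul _ _)

lemma dop_smul_left {r : ℕ} (c : ℂ) (p w : MvPolynomial (Fin r) ℂ) :
    dop (c • p) w = c • dop p w := by
  induction p using MvPolynomial.induction_on' with
  | add p₁ p₂ ih₁ ih₂ => rw [smul_add, dop_add_left, ih₁, ih₂, dop_add_left, smul_add]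
  | monomial m α => rw [MvPolynomial.smul_monomial, dop_monomial_left, dop_monomial_left, smul_assoc]

lemma fact_add_aux (a b : ℕ) : (a + b).factorial = (a + b).descFactorial b * a.factorial := by
  induction b with
  | zero => simp
  | succ k ih =>
      rw [show a + (k+1) = (a+k) + 1 by ring, Nat.factorial_succ, ih,
        Nat.succ_descFactorial_succ]
      ring

lemma prod_fact_add {r : ℕ} (m n : Fin r →₀ ℕ) :
    (∏ i ∈ (m + n).support, (((m + n) i).factorial : ℂ)) =
      (∏ i ∈ m.support, (((n + m) i).descFactorial (m i) : ℂ)) *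
        ∏ i ∈ n.support, ((n i).factorial : ℂ) := by
  have hms : m.support ⊆ (m + n).support := fun i hi => by
    simp only [Finsupp.mem_support_iff, Finsupp.add_apply] at *; omega
  have hns : n.support ⊆ (m + n).support := fun i hi => by
    simp only [Finsupp.mem_support_iff, Finsupp.add_apply] at *; omega
  calc (∏ i ∈ (m + n).support, (((m + n) i).factorial : ℂ))
      = ∏ i ∈ (m + n).support,
          ((((n + m) i).descFactorial (m i) : ℂ) * ((n i).factorial : ℂ)) := by
        apply Finset.prod_congr rfl
        intro i _
        rw [show (m + n) i = m i + n i from rfl, show (n + m) i = n i + m i from rfl]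
        norm_cast
        rw [show m i + n i = n i + m i by ring, fact_add_aux (n i) (m i)]
    _ = (∏ i ∈ (m + n).support, (((n + m) i).descFactorial (m i) : ℂ)) *
          ∏ i ∈ (m + n).support, ((n i).factorial : ℂ) := Finset.prod_mul_distrib
    _ = (∏ i ∈ m.support, (((n + m) i).descFactorial (m i) : ℂ)) *
          ∏ i ∈ n.support, ((n i).factorial : ℂ) := by
        rw [← Finset.prod_subset hms (fun i _ hi => by
            rw [Finsupp.notMem_support_iff.mp hi]; simp),
          ← Finset.prod_subset hns (fun i _ hi => by
            rw [Finsupp.notMem_support_iff.mp hi]; simp)]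

lemma coeff_zero_dop {r : ℕ} (p w : MvPolynomial (Fin r) ℂ) :
    coeff 0 (dop p w) =
      ∑ m ∈ p.support, coeff m p * coeff m w * ∏ i ∈ m.support, ((m i).factorial : ℂ) := by
  rw [dop, coeff_sum]
  apply Finset.sum_congr rfl
  intro m _
  rw [coeff_smul, coeff_derivMon, zero_add, smul_eq_mul, mul_assoc]
  congr 1
  congr 1
  apply Finset.prod_congr rfl
  intro i _
  rw [Nat.descFactorial_self]

lemma dop_mul {r : ℕ} (p q w : MvPolynomial (Fin r) ℂ) :
    coeff 0 (dop (p * q) w) = coeff 0 (dop q (dop p w)) := by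
  induction p using MvPolynomial.induction_on' with
  | add p₁ p₂ ih₁ ih₂ =>
      rw [add_mul, dop_add_left, coeff_add, ih₁, ih₂, ← coeff_add, ← dop_add_right,
        ← dop_add_left]
  | monomial m α =>
    induction q using MvPolynomial.induction_on' with
    | add q₁ q₂ ih₁ ih₂ =>
        rw [mul_add, dop_add_left, coeff_add, ih₁, ih₂, dop_add_left, coeff_add]
    | monomial n β =>
        rw [monomial_mul, dop_monomial_left, dop_monomial_left, dop_monomial_left,
          derivMon_smul, coeff_smul, coeff_smul, coeff_smul, coeff_derivMon,
          coeff_derivMon, coeff_derivMon]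
        simp only [smul_eq_mul, zero_add]
        rw [show n + m = m + n from add_comm n m]
        have : (∏ i ∈ (m+n).support, (((m + n) i).descFactorial ((m+n) i) : ℂ)) =
            ∏ i ∈ (m+n).support, (((m + n) i).factorial : ℂ) := by
          apply Finset.prod_congr rfl; intro i _; rw [Nat.descFactorial_self]
        rw [this, prod_fact_add m n]
        have : (∏ i ∈ n.support, ((n i).descFactorial (n i) : ℂ)) =
            ∏ i ∈ n.support, ((n i).factorial : ℂ) := by
          apply Finset.prod_congr rfl; intro i _; rw [Nat.descFactorial_self]
        rw [this, show n + m = m + n from add_comm n m]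
        ring

lemma foldr_contr {r : ℕ} (l : List (Fin r)) (hl : l.Pairwise (· < ·)) (g : SupSp r)
    (U : Finset (Fin r)) :
    l.foldr (fun i acc => contrOne i acc) g U =
      if ∀ i ∈ l, i ∉ U then
        ((-1 : ℂ) ^ ((l.map (fun i => ((U ∪ l.toFinset).filter (· < i)).card)).sum)) •
          g (U ∪ l.toFinset)
      else 0 := by
  induction l generalizing U with
  | nil => simp
  | cons i l ih =>
      obtain ⟨hi, hl'⟩ := List.pairwise_cons.mp hl
      simp only [List.foldr_cons]
      show contrOne i (List.foldr (fun i acc => contrOne i acc) g l) U = _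
      rw [contrOne]
      by_cases hiU : i ∈ U
      · rw [if_pos hiU, if_neg (by push_neg; exact ⟨i, List.mem_cons_self (a := i) (l := l), hiU⟩)]
      · rw [if_neg hiU, ih hl' (insert i U)]
        by_cases hU : ∀ j ∈ l, j ∉ U
        · have hcond : ∀ j ∈ l, j ∉ insert i U := by
            intro j hj
            simp only [Finset.mem_insert, not_or]
            exact ⟨fun e => absurd (e ▸ hi j hj) (lt_irrefl j), hU j hj⟩
          rw [if_pos hcond, if_pos (by
            intro j hj
            rcases List.mem_cons.mp hj with e | hj'
            · exact e ▸ hiU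
            · exact hU j hj')]
          have hset : insert i U ∪ l.toFinset = U ∪ (i :: l).toFinset := by
            rw [List.toFinset_cons, Finset.insert_union, Finset.union_insert]
          have hfi : ((U ∪ (i :: l).toFinset).filter (· < i)).card
              = (U.filter (fun t => t < i)).card := by
            congr 1
            rw [Finset.filter_union]
            have h0 : ((i :: l).toFinset.filter (· < i)) = ∅ := by
              rw [Finset.filter_eq_empty_iff]
              intro x hx
              have : x = i ∨ x ∈ l := by simpa using hx
              rcases this with e | hx'
              · exact e ▸ lt_irrefl i
              · exact fun hlt => absurd (hi x hx') (not_lt_of_gt hlt)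
            rw [h0, Finset.union_empty]
          rw [hset, smul_smul, ← pow_add]
          simp only [List.map_cons, List.sum_cons, hfi]
        · push_neg at hU
          obtain ⟨j, hj, hjU⟩ := hU
          rw [if_neg (by
              push_neg
              exact ⟨j, hj, Finset.mem_insert.mpr (Or.inr hjU)⟩),
            if_neg (by
              push_neg
              exact ⟨j, List.mem_cons_of_mem i hj, hjU⟩)]
          simp

def sg {r : ℕ} (A B : Finset (Fin r)) : ℕ := ∑ i ∈ A, (B.filter (· < i)).card

lemma iotaSet_eq {r : ℕ} (S : Finset (Fin r)) (g : SupSp r) (U : Finset (Fin r)) :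
    iotaSet S g U =
      if Disjoint S U then ((-1 : ℂ) ^ sg S (U ∪ S)) • g (U ∪ S) else 0 := by
  rw [iotaSet, foldr_contr _ (Finset.sortedLT_sort S).pairwise g U]
  have h1 : (∀ i ∈ S.sort (· ≤ ·), i ∉ U) ↔ Disjoint S U := by
    simp only [Finset.mem_sort]
    exact ⟨fun h => Finset.disjoint_left.mpr h, fun h a ha => Finset.disjoint_left.mp h ha⟩
  have h2 : (S.sort (· ≤ ·)).toFinset = S := Finset.sort_toFinset S _
  rw [h2]
  by_cases hd : Disjoint S U
  · rw [if_pos (h1.mpr hd), if_pos hd]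
    congr 1
    congr 1
    rw [sg, ← Finset.sum_map_toList]
    exact List.Perm.sum_eq (List.Perm.map _ (Finset.sort_perm_toList S _))
  · rw [if_neg (fun h => hd (h1.mp h)), if_neg hd]

lemma sg_union_left {r : ℕ} {A B : Finset (Fin r)} (C : Finset (Fin r)) (h : Disjoint A B) :
    sg (A ∪ B) C = sg A C + sg B C := Finset.sum_union h

lemma sg_union_right {r : ℕ} (A : Finset (Fin r)) {B C : Finset (Fin r)} (h : Disjoint B C) :
    sg A (B ∪ C) = sg A B + sg A C := by
  rw [sg, sg, sg, ← Finset.sum_add_distrib]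
  apply Finset.sum_congr rfl
  intro i _
  rw [Finset.filter_union]
  exact Finset.card_union_of_disjoint (Finset.disjoint_filter_filter h)

lemma sg_add_sg {r : ℕ} {A B : Finset (Fin r)} (h : Disjoint A B) :
    sg A B + sg B A = A.card * B.card := by
  rw [sg, sg]
  simp only [Finset.card_filter]
  rw [Finset.sum_comm (s := B)]
  rw [← Finset.sum_add_distrib]
  rw [show A.card * B.card = ∑ i ∈ A, ∑ j ∈ B, 1 from by simp [mul_comm]]
  apply Finset.sum_congr rfl
  intro i hi
  rw [← Finset.sum_add_distrib]
  apply Finset.sum_congr rfl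
  intro j hj
  have hne : j ≠ i := fun e => Finset.disjoint_left.mp h hi (e ▸ hj)
  rcases lt_or_gt_of_ne hne with hlt | hgt
  · rw [if_pos hlt, if_neg (not_lt_of_gt hlt)]
  · rw [if_neg (not_lt_of_gt hgt), if_pos hgt]


lemma dop_sum_left {r : ℕ} {ι : Type*} (s : Finset ι) (p : ι → MvPolynomial (Fin r) ℂ)
    (w : MvPolynomial (Fin r) ℂ) : dop (∑ x ∈ s, p x) w = ∑ x ∈ s, dop (p x) w := by
  classical
  induction s using Finset.cons_induction with
  | empty => simp [dop_zero_left]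
  | cons a s ha ih => rw [Finset.sum_cons, dop_add_left, ih, Finset.sum_cons]

lemma dop_sum_right {r : ℕ} {ι : Type*} (p : MvPolynomial (Fin r) ℂ) (s : Finset ι)
    (w : ι → MvPolynomial (Fin r) ℂ) : dop p (∑ x ∈ s, w x) = ∑ x ∈ s, dop p (w x) := by
  classical
  induction s using Finset.cons_induction with
  | empty => simp [dop_zero_right]
  | cons a s ha ih => rw [Finset.sum_cons, dop_add_right, ih, Finset.sum_cons]

lemma odot_apply {r : ℕ} (f g : SupSp r) (W : Finset (Fin r)) :
    odot f g W = ∑ S : Finset (Fin r), dop (f S) (iotaSet S g W) := by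
  rw [odot, Finset.sum_apply]
  apply Finset.sum_congr rfl
  intro S _
  rw [Finset.sum_apply]
  rfl

lemma spair_eq {r : ℕ} (F G : SupSp r) :
    spair F G = ∑ S : Finset (Fin r), ((-1 : ℂ) ^ sg S S) * coeff 0 (dop (F S) (G S)) := by
  rw [spair, odot_apply, coeff_sum]
  apply Finset.sum_congr rfl
  intro S _
  rw [iotaSet_eq, if_pos (Finset.disjoint_empty_right S), Finset.empty_union,
    dop_smul_right, coeff_smul, smul_eq_mul]

lemma pair_sign {r a b c d : ℕ} {f g : SupSp r} (hf : BiHom a b f) (hg : BiHom c d g)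
    (h : SupSp r) (T U : Finset (Fin r)) (hd : Disjoint T U) :
    ((-1 : ℂ) ^ (sg (T ∪ U) (T ∪ U) + sg T U)) *
        coeff 0 (dop (h U) (dop (f T) (g (T ∪ U)))) =
      ((-1 : ℂ) ^ (b * (d - b) + sg U U + sg T (T ∪ U))) *
        coeff 0 (dop (h U) (dop (f T) (g (T ∪ U)))) := by
  by_cases hT : T.card = b
  · by_cases hS : (T ∪ U).card = d
    · have key : sg T U + sg U T = b * (d - b) := by
        rw [sg_add_sg hd, hT]
        have hU : U.card = d - b := by
          have := Finset.card_union_of_disjoint hd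
          omega
        rw [hU]
      have e1 : sg (T ∪ U) (T ∪ U) = sg T (T ∪ U) + sg U (T ∪ U) := sg_union_left _ hd
      have e2 : sg T (T ∪ U) = sg T T + sg T U := sg_union_right _ hd
      have e3 : sg U (T ∪ U) = sg U T + sg U U := sg_union_right _ hd
      have hexp : sg (T ∪ U) (T ∪ U) + sg T U
          = b * (d - b) + sg U U + sg T (T ∪ U) := by
        rw [e1, e3, ← key]
        omega
      rw [hexp]
    · rw [(hg (T ∪ U)).2 hS, dop_zero_right, dop_zero_right, MvPolynomial.coeff_zero,
        mul_zero, mul_zero]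
  · rw [(hf T).2 hT, dop_zero_left, dop_zero_right, MvPolynomial.coeff_zero,
      mul_zero, mul_zero]


lemma pair_sign2 {r a b c d : ℕ} {f g : SupSp r} (hf : BiHom a b f) (hg : BiHom c d g)
    (h : SupSp r) (S T : Finset (Fin r)) (hsub : T ⊆ S) :
    ((-1 : ℂ) ^ (sg S S + sg T (S \ T))) *
        coeff 0 (dop (h (S \ T)) (dop (f T) (g S))) =
      ((-1 : ℂ) ^ (b * (d - b) + sg (S \ T) (S \ T) + sg T (T ∪ S \ T))) *
        coeff 0 (dop (h (S \ T)) (dop (f T) (g (T ∪ S \ T)))) := by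
  have hd : Disjoint T (S \ T) := Finset.disjoint_sdiff
  have h2 := pair_sign hf hg h T (S \ T) hd
  rw [Finset.union_sdiff_of_subset hsub] at h2 ⊢
  exact h2

/-- For a bihomogeneous `f ∈ Ψ_L` of bidegree `(a,b)`, the adjoint of left multiplication
by `f` with respect to the constant-term pairing is `(-1)^{b(d-b)} (f ⊙ -)` on the
bigraded component `Ψ_{L^*}^{c,d}`. -/
theorem stmt4 (r a b c d : ℕ) (f : SupSp r) (hf : BiHom a b f)
    (h : SupSp r) (g : SupSp r) (hg : BiHom c d g) :
    spair (smul' f h) g = (-1 : ℂ) ^ (b * (d - b)) * spair h (odot f g) := by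
  classical
  have lhs1 : spair (smul' f h) g
      = ∑ S : Finset (Fin r), ∑ T ∈ S.powerset,
          ((-1 : ℂ) ^ (sg S S + sg T (S \ T))) *
            coeff 0 (dop (h (S \ T)) (dop (f T) (g S))) := by
    rw [spair_eq]
    apply Finset.sum_congr rfl
    intro S _
    rw [show smul' f h S = ∑ T ∈ S.powerset,
        ((-1 : ℂ) ^ sg T (S \ T)) • (f T * h (S \ T)) from rfl]
    rw [dop_sum_left, coeff_sum, Finset.mul_sum]
    apply Finset.sum_congr rfl
    intro T _
    rw [dop_smul_left, coeff_smul, smul_eq_mul, dop_mul, pow_add]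
    ring
  have rhs1 : (-1 : ℂ) ^ (b * (d - b)) * spair h (odot f g)
      = ∑ U : Finset (Fin r), ∑ T : Finset (Fin r),
          if Disjoint T U then
            ((-1 : ℂ) ^ (b * (d - b) + sg U U + sg T (T ∪ U))) *
              coeff 0 (dop (h U) (dop (f T) (g (T ∪ U))))
          else 0 := by
    rw [spair_eq, Finset.mul_sum]
    apply Finset.sum_congr rfl
    intro U _
    rw [odot_apply, dop_sum_right, coeff_sum, Finset.mul_sum, Finset.mul_sum]
    apply Finset.sum_congr rfl
    intro T _
    rw [iotaSet_eq]
    by_cases hd : Disjoint T U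
    · rw [if_pos hd, if_pos hd, Finset.union_comm U T, dop_smul_right, dop_smul_right,
        coeff_smul, smul_eq_mul, pow_add, pow_add]
      ring
    · rw [if_neg hd, if_neg hd, dop_zero_right, dop_zero_right, MvPolynomial.coeff_zero,
        mul_zero, mul_zero]
  rw [lhs1, rhs1, Finset.sum_sigma']
  rw [show (∑ U : Finset (Fin r), ∑ T : Finset (Fin r),
      if Disjoint T U then
        ((-1 : ℂ) ^ (b * (d - b) + sg U U + sg T (T ∪ U))) *
          coeff 0 (dop (h U) (dop (f T) (g (T ∪ U))))
      else 0)
    = ∑ y ∈ (Finset.univ ×ˢ Finset.univ).filter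
        (fun y : Finset (Fin r) × Finset (Fin r) => Disjoint y.1 y.2),
        ((-1 : ℂ) ^ (b * (d - b) + sg y.2 y.2 + sg y.1 (y.1 ∪ y.2))) *
          coeff 0 (dop (h y.2) (dop (f y.1) (g (y.1 ∪ y.2)))) from by
    rw [Finset.sum_filter, Finset.sum_product]
    exact (Finset.sum_comm).symm]
  apply Finset.sum_nbij' (i := fun x => (x.2, x.1 \ x.2))
    (j := fun y => ⟨y.1 ∪ y.2, y.1⟩)
  · intro x hx
    rw [Finset.mem_sigma] at hx
    rw [Finset.mem_filter]
    exact ⟨Finset.mem_product.mpr ⟨Finset.mem_univ _, Finset.mem_univ _⟩,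
      Finset.disjoint_sdiff⟩
  · intro y hy
    rw [Finset.mem_sigma]
    exact ⟨Finset.mem_univ _, Finset.mem_powerset.mpr Finset.subset_union_left⟩
  · intro x hx
    rw [Finset.mem_sigma] at hx
    have hsub : x.2 ⊆ x.1 := Finset.mem_powerset.mp hx.2
    obtain ⟨S, T⟩ := x
    simp only at hsub ⊢
    congr 1
    exact Finset.union_sdiff_of_subset hsub
  · intro y hy
    rw [Finset.mem_filter] at hy
    obtain ⟨T, U⟩ := y
    simp only at hy ⊢
    rw [Finset.union_sdiff_cancel_left hy.2]
  · intro x hx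
    rw [Finset.mem_sigma] at hx
    have hsub : x.2 ⊆ x.1 := Finset.mem_powerset.mp hx.2
    obtain ⟨S, T⟩ := x
    simp only at hsub ⊢
    exact pair_sign2 hf hg h S T hsub
end

section
/- Let T_M(x,y) be the Tutte polynomial of a matroid M of rank r on ground set of size n, with coefficients t_{i,j} (coefficient of x^i y^j). Then for each 1 ≤ k ≤ n−1: Σ_{i=0}^{k} (−1)^i Σ_{u=0}^{r−k+i} binomial(r−u, k−i) · t_{u, n−r−i} = 0. -/
open MvPolynomial

/-- The Tutte polynomial of a matroid on `Fin n` given by its rank function, in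
variables `x = X 0`, `y = X 1`: `T = ∑_{A⊆E} (x-1)^{r-rk A} (y-1)^{|A|-rk A}`. -/
noncomputable def tuttePoly (n r : ℕ) (rk : Finset (Fin n) → ℕ) : MvPolynomial (Fin 2) ℤ :=
  ∑ A : Finset (Fin n), (X 0 - 1) ^ (r - rk A) * (X 1 - 1) ^ (A.card - rk A)

/-- The coefficient `t_{u,j}` of `x^u y^j` in the Tutte polynomial, with the
convention that it vanishes for negative `j`. -/
noncomputable def tutteCoef (n r : ℕ) (rk : Finset (Fin n) → ℕ) (u : ℕ) (j : ℤ) : ℤ :=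
  if 0 ≤ j then
    (tuttePoly n r rk).coeff (Finsupp.single (0 : Fin 2) u + Finsupp.single (1 : Fin 2) j.toNat)
  else 0

set_option maxHeartbeats 1000000

noncomputable def psiK : Polynomial ℤ →+* RatFunc ℚ :=
  (algebraMap (Polynomial ℚ) (RatFunc ℚ)).comp (Polynomial.mapRingHom (Int.castRingHom ℚ))

lemma psiK_C (a : ℤ) : psiK (Polynomial.C a) = (a : RatFunc ℚ) := by
  have h : (Polynomial.C a : Polynomial ℤ) = (a : Polynomial ℤ) := by
    simp
  rw [h, map_intCast]

lemma psiK_inj : Function.Injective psiK :=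
  (RatFunc.algebraMap_injective ℚ).comp (Polynomial.map_injective _ Int.cast_injective)

lemma arith {K : Type*} [Field K] (p q : K) (hp : p ≠ 0) (hq : q ≠ 0)
    {r n s m : ℕ} (h1 : s ≤ r) (h2 : s ≤ m) (h3 : r ≤ n) (h4 : m - s ≤ n - r) (h5 : m ≤ n) :
    (p ^ r * q ^ (n - r)) * ((q * p⁻¹) ^ (r - s) * (p * q⁻¹) ^ (m - s)) = p ^ m * q ^ (n - m) := by
  obtain ⟨a, rfl⟩ := Nat.exists_eq_add_of_le h1
  obtain ⟨b, rfl⟩ := Nat.exists_eq_add_of_le h2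
  obtain ⟨d, hd⟩ : ∃ d, n = s + a + b + d := ⟨n - (s+a+b), by omega⟩
  subst hd
  have e1 : s + a + b + d - (s + a) = b + d := by omega
  have e2 : s + a - s = a := by omega
  have e3 : s + b - s = b := by omega
  have e4 : s + a + b + d - (s + b) = a + d := by omega
  rw [e1, e2, e3, e4]
  field_simp
  have ha : p ^ a * p⁻¹ ^ a = 1 := by rw [← mul_pow, mul_inv_cancel₀ hp, one_pow]
  have hb : q ^ b * q⁻¹ ^ b = 1 := by rw [← mul_pow, mul_inv_cancel₀ hq, one_pow]
  linear_combination (p ^ s * p ^ b * q ^ a * q ^ d * (q ^ b * q⁻¹ ^ b)) * ha +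
    (p ^ s * p ^ b * q ^ a * q ^ d) * hb

lemma decomp (d : Fin 2 →₀ ℕ) :
    d = Finsupp.single 0 (d 0) + Finsupp.single 1 (d 1) := by
  ext i
  fin_cases i <;> simp [Finsupp.single_apply]

lemma happ0 (u j : ℕ) :
    ((Finsupp.single (0 : Fin 2) u + Finsupp.single 1 j : Fin 2 →₀ ℕ)) 0 = u := by
  simp [Finsupp.single_apply]

lemma happ1 (u j : ℕ) :
    ((Finsupp.single (0 : Fin 2) u + Finsupp.single 1 j : Fin 2 →₀ ℕ)) 1 = j := by
  simp [Finsupp.single_apply]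

lemma keyIdentity (n r : ℕ) (rk : Finset (Fin n) → ℕ)
    (hcard : ∀ A, rk A ≤ A.card)
    (hmono : ∀ A B, A ⊆ B → rk A ≤ rk B)
    (hsub : ∀ A B, rk (A ∪ B) + rk (A ∩ B) ≤ rk A + rk B)
    (hrk : rk Finset.univ = r) :
    ∑ u ∈ Finset.range (r + 1), ∑ j ∈ Finset.range (n - r + 1),
      Polynomial.C ((tuttePoly n r rk).coeff
          (Finsupp.single (0 : Fin 2) u + Finsupp.single 1 j)) *
        ((1 + Polynomial.X) ^ (r - u) * (-Polynomial.X : Polynomial ℤ) ^ (n - r - j)) = 1 := by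
  classical
  set T := tuttePoly n r rk with hT
  have hrn : r ≤ n := by
    have h := hcard Finset.univ
    rw [hrk] at h
    simpa [Finset.card_univ] using h
  have hrkA : ∀ A : Finset (Fin n), rk A ≤ r := fun A => hrk ▸ hmono A Finset.univ (Finset.subset_univ A)
  have hAn : ∀ A : Finset (Fin n), A.card ≤ n := fun A => by
    simpa [Finset.card_univ] using Finset.card_le_univ A
  have hnull : ∀ A : Finset (Fin n), A.card - rk A ≤ n - r := by
    intro A
    have h1 := hsub A (Finset.univ \ A)
    have h2 : A ∪ (Finset.univ \ A) = Finset.univ := by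
      rw [Finset.union_sdiff_of_subset (Finset.subset_univ A)]
    have h3 := hcard (Finset.univ \ A)
    have h4 : (Finset.univ \ A).card = n - A.card := by
      rw [Finset.card_sdiff_of_subset (Finset.subset_univ A)]
      simp [Finset.card_univ]
    rw [h2, hrk] at h1
    rw [h4] at h3
    have := hAn A
    omega
  -- degree bounds
  have hXC : ∀ i j : Fin 2, degreeOf i (X j - 1 : MvPolynomial (Fin 2) ℤ) ≤ if i = j then 1 else 0 := by
    intro i j
    refine le_trans (degreeOf_sub_le _ _ _) ?_
    have h1 : degreeOf i (1 : MvPolynomial (Fin 2) ℤ) = 0 := by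
      rw [← C_1]; exact degreeOf_C _ _
    rw [degreeOf_X, h1]
    exact max_le le_rfl (Nat.zero_le _)
  have hdegmul : ∀ (i : Fin 2) (a b : ℕ),
      degreeOf i ((X 0 - 1) ^ a * (X 1 - 1) ^ b : MvPolynomial (Fin 2) ℤ) ≤
        a * degreeOf i (X 0 - 1 : MvPolynomial (Fin 2) ℤ) +
        b * degreeOf i (X 1 - 1 : MvPolynomial (Fin 2) ℤ) := by
    intro i a b
    exact le_trans (degreeOf_mul_le _ _ _)
      (add_le_add (degreeOf_pow_le _ _ _) (degreeOf_pow_le _ _ _))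
  have hsupp : ∀ d ∈ T.support, d 0 ≤ r ∧ d 1 ≤ n - r := by
    intro d hd
    have hd0 : degreeOf 0 T ≤ r := by
      rw [hT, tuttePoly]
      refine le_trans (degreeOf_sum_le _ _ _) (Finset.sup_le fun A _ => ?_)
      refine le_trans (hdegmul 0 _ _) ?_
      have b1 := hXC 0 0
      have b2 := hXC 0 1
      simp only [if_pos rfl] at b1
      rw [if_neg (by decide)] at b2
      have := hrkA A
      calc (r - rk A) * degreeOf 0 (X 0 - 1 : MvPolynomial (Fin 2) ℤ) +
            (A.card - rk A) * degreeOf 0 (X 1 - 1 : MvPolynomial (Fin 2) ℤ)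
          ≤ (r - rk A) * 1 + (A.card - rk A) * 0 :=
            add_le_add (Nat.mul_le_mul_left _ b1) (Nat.mul_le_mul_left _ b2)
        _ ≤ r := by omega
    have hd1 : degreeOf 1 T ≤ n - r := by
      rw [hT, tuttePoly]
      refine le_trans (degreeOf_sum_le _ _ _) (Finset.sup_le fun A _ => ?_)
      refine le_trans (hdegmul 1 _ _) ?_
      have b1 := hXC 1 0
      have b2 := hXC 1 1
      rw [if_neg (by decide)] at b1
      simp only [if_pos rfl] at b2
      have := hnull A
      calc (r - rk A) * degreeOf 1 (X 0 - 1 : MvPolynomial (Fin 2) ℤ) +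
            (A.card - rk A) * degreeOf 1 (X 1 - 1 : MvPolynomial (Fin 2) ℤ)
          ≤ (r - rk A) * 0 + (A.card - rk A) * 1 :=
            add_le_add (Nat.mul_le_mul_left _ b1) (Nat.mul_le_mul_left _ b2)
        _ ≤ n - r := by omega
    exact ⟨le_trans (monomial_le_degreeOf 0 hd) hd0, le_trans (monomial_le_degreeOf 1 hd) hd1⟩
  -- pass to RatFunc ℚ
  apply psiK_inj
  rw [map_one, map_sum]
  simp only [map_sum, map_mul, map_pow, map_add, map_one, map_neg, psiK_C]
  set Z : RatFunc ℚ := psiK Polynomial.X with hZdef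
  have hX1 : (1 + Polynomial.X : Polynomial ℤ) ≠ 0 := fun h => by
    simpa [Polynomial.coeff_one] using congrArg (fun P => Polynomial.coeff P 1) h
  have hp : (1 : RatFunc ℚ) + Z ≠ 0 := by
    rw [hZdef, ← map_one psiK, ← map_add]
    exact fun h => hX1 (psiK_inj (by simpa using h))
  have hZ : Z ≠ 0 := by
    rw [hZdef, ← map_zero psiK]
    exact fun h => Polynomial.X_ne_zero (psiK_inj h)
  have hq : (-Z : RatFunc ℚ) ≠ 0 := neg_ne_zero.mpr hZ
  set p : RatFunc ℚ := 1 + Z with hpdef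
  set q : RatFunc ℚ := -Z with hqdef
  have hpq : p + q = 1 := by rw [hpdef, hqdef]; ring
  -- step 1: factor out p^r q^(n-r)
  have step1 : ∑ u ∈ Finset.range (r + 1), ∑ j ∈ Finset.range (n - r + 1),
      (((T.coeff (Finsupp.single (0 : Fin 2) u + Finsupp.single 1 j) : ℤ) : RatFunc ℚ)) *
        (p ^ (r - u) * q ^ (n - r - j)) =
      (p ^ r * q ^ (n - r)) * ∑ u ∈ Finset.range (r + 1), ∑ j ∈ Finset.range (n - r + 1),
        (((T.coeff (Finsupp.single (0 : Fin 2) u + Finsupp.single 1 j) : ℤ) : RatFunc ℚ)) *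
          (p⁻¹ ^ u * q⁻¹ ^ j) := by
    rw [Finset.mul_sum]
    refine Finset.sum_congr rfl fun u hu => ?_
    rw [Finset.mul_sum]
    refine Finset.sum_congr rfl fun j hj => ?_
    rw [pow_sub₀ p hp (by simpa [Nat.lt_succ_iff] using hu),
        pow_sub₀ q hq (by simpa [Nat.lt_succ_iff] using hj), inv_pow, inv_pow]
    ring
  -- step 2: the double sum is an eval₂
  have step2 : ∑ u ∈ Finset.range (r + 1), ∑ j ∈ Finset.range (n - r + 1),
      (((T.coeff (Finsupp.single (0 : Fin 2) u + Finsupp.single 1 j) : ℤ) : RatFunc ℚ)) *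
        (p⁻¹ ^ u * q⁻¹ ^ j) =
      eval₂ (Int.castRingHom (RatFunc ℚ)) ![p⁻¹, q⁻¹] T := by
    rw [eval₂_eq' (Int.castRingHom (RatFunc ℚ)) ![p⁻¹, q⁻¹] T]
    simp only [Fin.prod_univ_two, Matrix.cons_val_zero, Matrix.cons_val_one, Matrix.head_cons]
    rw [← Finset.sum_product']
    have hinj : ∀ x ∈ Finset.range (r + 1) ×ˢ Finset.range (n - r + 1),
        ∀ y ∈ Finset.range (r + 1) ×ˢ Finset.range (n - r + 1),
        (fun uj : ℕ × ℕ => Finsupp.single (0 : Fin 2) uj.1 + Finsupp.single 1 uj.2) x =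
        (fun uj : ℕ × ℕ => Finsupp.single (0 : Fin 2) uj.1 + Finsupp.single 1 uj.2) y → x = y := by
      intro x _ y _ h
      have h0 : x.1 = y.1 := by
        have := DFunLike.congr_fun h (0 : Fin 2)
        rwa [happ0, happ0] at this
      have h1 : x.2 = y.2 := by
        have := DFunLike.congr_fun h (1 : Fin 2)
        rwa [happ1, happ1] at this
      exact Prod.ext h0 h1
    calc ∑ uj ∈ Finset.range (r + 1) ×ˢ Finset.range (n - r + 1),
          (((T.coeff (Finsupp.single (0 : Fin 2) uj.1 + Finsupp.single 1 uj.2) : ℤ) : RatFunc ℚ)) *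
            (p⁻¹ ^ uj.1 * q⁻¹ ^ uj.2)
        = ∑ uj ∈ Finset.range (r + 1) ×ˢ Finset.range (n - r + 1),
            (((T.coeff (Finsupp.single (0 : Fin 2) uj.1 + Finsupp.single 1 uj.2) : ℤ) : RatFunc ℚ)) *
              (p⁻¹ ^ ((Finsupp.single (0 : Fin 2) uj.1 + Finsupp.single 1 uj.2 : Fin 2 →₀ ℕ) 0) *
               q⁻¹ ^ ((Finsupp.single (0 : Fin 2) uj.1 + Finsupp.single 1 uj.2 : Fin 2 →₀ ℕ) 1)) := by
          refine Finset.sum_congr rfl fun uj _ => ?_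
          rw [happ0, happ1]
      _ = ∑ d ∈ (Finset.range (r + 1) ×ˢ Finset.range (n - r + 1)).image
            (fun uj : ℕ × ℕ => Finsupp.single (0 : Fin 2) uj.1 + Finsupp.single 1 uj.2),
            (((T.coeff d : ℤ) : RatFunc ℚ)) * (p⁻¹ ^ d 0 * q⁻¹ ^ d 1) :=
          (Finset.sum_image
            (f := fun d : Fin 2 →₀ ℕ =>
              ((T.coeff d : ℤ) : RatFunc ℚ) * (p⁻¹ ^ d 0 * q⁻¹ ^ d 1)) hinj).symm
      _ = ∑ d ∈ T.support, (((T.coeff d : ℤ) : RatFunc ℚ)) * (p⁻¹ ^ d 0 * q⁻¹ ^ d 1) := by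
          refine (Finset.sum_subset ?_ ?_).symm
          · intro d hd
            refine Finset.mem_image.mpr ⟨(d 0, d 1), ?_, (decomp d).symm⟩
            have := hsupp d hd
            simp only [Finset.mem_product, Finset.mem_range]
            omega
          · intro d _ hd
            rw [MvPolynomial.notMem_support_iff.mp hd]
            simp
      _ = ∑ d ∈ T.support,
            (Int.castRingHom (RatFunc ℚ)) (T.coeff d) * (p⁻¹ ^ d 0 * q⁻¹ ^ d 1) := by
          simp [Int.coe_castRingHom]
  -- step 3: evaluate
  have step3 : eval₂ (Int.castRingHom (RatFunc ℚ)) ![p⁻¹, q⁻¹] T =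
      ∑ A : Finset (Fin n), (q * p⁻¹) ^ (r - rk A) * (p * q⁻¹) ^ (A.card - rk A) := by
    rw [hT, tuttePoly, MvPolynomial.eval₂_sum]
    refine Finset.sum_congr rfl fun A _ => ?_
    rw [eval₂_mul, eval₂_pow, eval₂_pow, MvPolynomial.eval₂_sub, MvPolynomial.eval₂_sub,
      eval₂_X, eval₂_X, eval₂_one]
    simp only [Matrix.cons_val_zero, Matrix.cons_val_one, Matrix.head_cons]
    have hq1 : q = 1 - p := by rw [hpdef, hqdef]; ring
    have hp1 : p = 1 - q := by rw [hpdef, hqdef]; ring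
    have hx : p⁻¹ - 1 = q * p⁻¹ := by
      rw [hq1, sub_mul, one_mul, mul_inv_cancel₀ hp]
    have hy : q⁻¹ - 1 = p * q⁻¹ := by
      rw [hp1, sub_mul, one_mul, mul_inv_cancel₀ hq]
    rw [hx, hy]
  -- step 4 + 5
  rw [step1, step2, step3, Finset.mul_sum]
  calc ∑ A : Finset (Fin n),
        (p ^ r * q ^ (n - r)) * ((q * p⁻¹) ^ (r - rk A) * (p * q⁻¹) ^ (A.card - rk A))
      = ∑ A : Finset (Fin n), p ^ A.card * q ^ (n - A.card) := by
        refine Finset.sum_congr rfl fun A _ => ?_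
        exact arith p q hp hq (hrkA A) (hcard A) hrn (hnull A) (hAn A)
    _ = ∑ A ∈ (Finset.univ : Finset (Fin n)).powerset,
          (∏ _i ∈ A, p) * ∏ _i ∈ Finset.univ \ A, q := by
        rw [Finset.powerset_univ]
        refine Finset.sum_congr rfl fun A _ => ?_
        rw [Finset.prod_const, Finset.prod_const,
          Finset.card_sdiff_of_subset (Finset.subset_univ A)]
        simp [Finset.card_univ]
    _ = ∏ _i : Fin n, (p + q) := (Finset.prod_add _ _ _).symm
    _ = 1 := by simp [hpq]

lemma coeffAux (m e k : ℕ) :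
    ((1 + Polynomial.X : Polynomial ℤ) ^ m * (-Polynomial.X) ^ e).coeff k =
      if e ≤ k then (-1 : ℤ) ^ e * ((m.choose (k - e) : ℤ)) else 0 := by
  have h0 : (-Polynomial.X : Polynomial ℤ) = Polynomial.C (-1) * Polynomial.X := by simp
  have h1 : (1 + Polynomial.X : Polynomial ℤ) ^ m * (-Polynomial.X) ^ e =
      Polynomial.C ((-1 : ℤ) ^ e) * ((1 + Polynomial.X) ^ m * Polynomial.X ^ e) := by
    rw [h0, mul_pow, ← Polynomial.C_pow]; ring
  rw [h1, Polynomial.coeff_C_mul, Polynomial.coeff_mul_X_pow']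
  split_ifs with h
  · rw [Polynomial.coeff_one_add_X_pow]
  · rw [mul_zero]

/-- Brylawski's linear relations among the coefficients of the Tutte polynomial:
for `1 ≤ k ≤ n-1`, `∑_{i=0}^{k} (-1)^i ∑_{u=0}^{r-k+i} C(r-u, k-i) t_{u, n-r-i} = 0`. -/
theorem stmt9 (n r : ℕ) (rk : Finset (Fin n) → ℕ)
    (hcard : ∀ A, rk A ≤ A.card)
    (hmono : ∀ A B, A ⊆ B → rk A ≤ rk B)
    (hsub : ∀ A B, rk (A ∪ B) + rk (A ∩ B) ≤ rk A + rk B)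
    (hrk : rk Finset.univ = r) :
    ∀ k : ℕ, 1 ≤ k → k ≤ n - 1 →
      ∑ i ∈ Finset.range (k + 1), (-1 : ℤ) ^ i *
        ∑ u ∈ Finset.range (((r : ℤ) - k + i + 1).toNat),
          ((r - u).choose (k - i) : ℤ) * tutteCoef n r rk u ((n : ℤ) - r - i) = 0 := by
  intro k hk1 hk2
  classical
  set T := tuttePoly n r rk with hT
  have hrn : r ≤ n := by
    have h := hcard Finset.univ
    rw [hrk] at h
    simpa [Finset.card_univ] using h
  -- coefficient of z^k in the key identity
  have key := keyIdentity n r rk hcard hmono hsub hrk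
  have hco := congrArg (fun P => Polynomial.coeff P k) key
  simp only [Polynomial.finset_sum_coeff, Polynomial.coeff_C_mul, coeffAux,
    Polynomial.coeff_one] at hco
  rw [if_neg (by omega : ¬ k = 0)] at hco
  -- reflect the inner sums
  have hMain : ∑ u ∈ Finset.range (r + 1), ∑ i ∈ Finset.range (n - r + 1),
      T.coeff (Finsupp.single (0 : Fin 2) u + Finsupp.single 1 (n - r - i)) *
        (if i ≤ k then (-1 : ℤ) ^ i * ((r - u).choose (k - i) : ℤ) else 0) = 0 := by
    refine Eq.trans ?_ hco
    refine Finset.sum_congr rfl fun u _ => ?_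
    conv_rhs => rw [← Finset.sum_range_reflect]
    refine Finset.sum_congr rfl fun i hi => ?_
    have hi' : i ≤ n - r := by
      simp only [Finset.mem_range] at hi; omega
    have e1 : n - r + 1 - 1 - i = n - r - i := by omega
    have e2 : n - r - (n - r - i) = i := by omega
    rw [e1, e2]
  -- transform the goal sum
  have e1 : ∀ i ∈ Finset.range (k + 1),
      (-1 : ℤ) ^ i * ∑ u ∈ Finset.range (((r : ℤ) - k + i + 1).toNat),
          ((r - u).choose (k - i) : ℤ) * tutteCoef n r rk u ((n : ℤ) - r - i)
      = ∑ u ∈ Finset.range (r + 1),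
          (if i ≤ n - r then
            T.coeff (Finsupp.single (0 : Fin 2) u + Finsupp.single 1 (n - r - i)) *
              ((-1 : ℤ) ^ i * ((r - u).choose (k - i) : ℤ))
          else 0) := by
    intro i hi
    have hik : i ≤ k := by simp only [Finset.mem_range] at hi; omega
    have hco2 : ∀ u : ℕ, tutteCoef n r rk u ((n : ℤ) - r - i) =
        if i ≤ n - r then
          T.coeff (Finsupp.single (0 : Fin 2) u + Finsupp.single 1 (n - r - i))
        else 0 := by
      intro u
      simp only [tutteCoef, ← hT]
      by_cases hle : i ≤ n - r
      · rw [if_pos (by omega : (0 : ℤ) ≤ (n : ℤ) - r - i), if_pos hle]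
        have : ((n : ℤ) - r - i).toNat = n - r - i := by omega
        rw [this]
      · rw [if_neg (by omega), if_neg hle]
    have hss : Finset.range (((r : ℤ) - k + i + 1).toNat) ⊆ Finset.range (r + 1) := by
      apply Finset.range_subset_range.mpr
      omega
    rw [Finset.sum_subset hss ?van]
    case van =>
      intro u hu hnu
      have h1 : r - u < k - i := by
        simp only [Finset.mem_range] at hu hnu
        omega
      rw [Nat.choose_eq_zero_of_lt h1]
      simp
    rw [Finset.mul_sum]
    refine Finset.sum_congr rfl fun u _ => ?_
    rw [hco2 u]
    split_ifs with h
    · ring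
    · ring
  rw [Finset.sum_congr rfl e1, Finset.sum_comm]
  set M := max (k + 1) (n - r + 1) with hM
  have b1 : ∀ u : ℕ, ∑ i ∈ Finset.range (k + 1),
      (if i ≤ n - r then
        T.coeff (Finsupp.single (0 : Fin 2) u + Finsupp.single 1 (n - r - i)) *
          ((-1 : ℤ) ^ i * ((r - u).choose (k - i) : ℤ))
      else 0)
      = ∑ i ∈ Finset.range M,
        (if i ≤ k ∧ i ≤ n - r then
          T.coeff (Finsupp.single (0 : Fin 2) u + Finsupp.single 1 (n - r - i)) *
            ((-1 : ℤ) ^ i * ((r - u).choose (k - i) : ℤ))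
        else 0) := by
    intro u
    rw [Finset.sum_congr rfl (g := fun i =>
        if i ≤ k ∧ i ≤ n - r then
          T.coeff (Finsupp.single (0 : Fin 2) u + Finsupp.single 1 (n - r - i)) *
            ((-1 : ℤ) ^ i * ((r - u).choose (k - i) : ℤ))
        else 0) ?congr1]
    case congr1 =>
      intro i hi
      have hik : i ≤ k := by simp only [Finset.mem_range] at hi; omega
      by_cases h : i ≤ n - r
      · rw [if_pos h]; exact (if_pos ⟨hik, h⟩).symm
      · rw [if_neg h]; exact (if_neg (by omega : ¬(i ≤ k ∧ i ≤ n - r))).symm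
    refine Finset.sum_subset (Finset.range_subset_range.mpr (le_max_left _ _)) ?van2
    intro i _ hni
    simp only [Finset.mem_range] at hni
    exact if_neg (by omega)
  have b2 : ∀ u : ℕ, ∑ i ∈ Finset.range (n - r + 1),
      T.coeff (Finsupp.single (0 : Fin 2) u + Finsupp.single 1 (n - r - i)) *
        (if i ≤ k then (-1 : ℤ) ^ i * ((r - u).choose (k - i) : ℤ) else 0)
      = ∑ i ∈ Finset.range M,
        (if i ≤ k ∧ i ≤ n - r then
          T.coeff (Finsupp.single (0 : Fin 2) u + Finsupp.single 1 (n - r - i)) *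
            ((-1 : ℤ) ^ i * ((r - u).choose (k - i) : ℤ))
        else 0) := by
    intro u
    rw [Finset.sum_congr rfl (g := fun i =>
        if i ≤ k ∧ i ≤ n - r then
          T.coeff (Finsupp.single (0 : Fin 2) u + Finsupp.single 1 (n - r - i)) *
            ((-1 : ℤ) ^ i * ((r - u).choose (k - i) : ℤ))
        else 0) ?congr2]
    case congr2 =>
      intro i hi
      have hi' : i ≤ n - r := by simp only [Finset.mem_range] at hi; omega
      by_cases h : i ≤ k
      · rw [if_pos h]; exact (if_pos ⟨h, hi'⟩).symm
      · rw [if_neg h, mul_zero]; exact (if_neg (by omega : ¬(i ≤ k ∧ i ≤ n - r))).symm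
    refine Finset.sum_subset (Finset.range_subset_range.mpr (le_max_right _ _)) ?van3
    intro i _ hni
    simp only [Finset.mem_range] at hni
    exact if_neg (by omega)
  calc ∑ u ∈ Finset.range (r + 1), ∑ i ∈ Finset.range (k + 1),
        (if i ≤ n - r then
          T.coeff (Finsupp.single (0 : Fin 2) u + Finsupp.single 1 (n - r - i)) *
            ((-1 : ℤ) ^ i * ((r - u).choose (k - i) : ℤ))
        else 0)
      = ∑ u ∈ Finset.range (r + 1), ∑ i ∈ Finset.range M,
          (if i ≤ k ∧ i ≤ n - r then
            T.coeff (Finsupp.single (0 : Fin 2) u + Finsupp.single 1 (n - r - i)) *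
              ((-1 : ℤ) ^ i * ((r - u).choose (k - i) : ℤ))
          else 0) := Finset.sum_congr rfl fun u _ => b1 u
    _ = ∑ u ∈ Finset.range (r + 1), ∑ i ∈ Finset.range (n - r + 1),
          T.coeff (Finsupp.single (0 : Fin 2) u + Finsupp.single 1 (n - r - i)) *
            (if i ≤ k then (-1 : ℤ) ^ i * ((r - u).choose (k - i) : ℤ) else 0) :=
        (Finset.sum_congr rfl fun u _ => (b2 u)).symm
    _ = 0 := hMain
end

section
/- Let L ⊆ C^n be an essential hyperplane arrangement of rank r in a vector space of dimension r, and for nonzero v ∈ L let ρ(v) be the number of hyperplanes H_i not containing v. A cocircuit vector is a nonzero element of a one-dimensional flat subspace L_F (F a flat of rank r−1). Then for every integer k ≤ 0, the ideal (v^{ρ(v)+k+1} : v ∈ L∖{0}) of Sym(L) is generated by the subset {v^{ρ(v)+k+1} : v a cocircuit vector}. -/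
open MvPolynomial

/-- The number `ρ(v)` of hyperplanes (kernels of the linear forms `ℓ i`) not
containing `v`. -/
noncomputable def rho {r n : ℕ} (l : Fin n → ((Fin r → ℂ) →ₗ[ℂ] ℂ)) (v : Fin r → ℂ) : ℕ :=
  Nat.card {i : Fin n // l i v ≠ 0}

/-- The image of `v ∈ L` in `Sym L`, as a linear polynomial. -/
noncomputable def linPoly {r : ℕ} (v : Fin r → ℂ) : MvPolynomial (Fin r) ℂ :=
  ∑ j : Fin r, C (v j) * X j

/-- `v` is a cocircuit vector: a nonzero vector spanning a one-dimensional flat subspace,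
i.e. any `w` vanishing on all hyperplanes containing `v` is a multiple of `v`. -/
def IsCocircuitVec {r n : ℕ} (l : Fin n → ((Fin r → ℂ) →ₗ[ℂ] ℂ)) (v : Fin r → ℂ) : Prop :=
  v ≠ 0 ∧ ∀ w : Fin r → ℂ, (∀ i : Fin n, l i v = 0 → l i w = 0) → ∃ c : ℂ, w = c • v

namespace Stmt13Aux

open Polynomial

/-- Mapping the coefficients of a polynomial over `MvPolynomial (Fin 2) ℂ` by a
linear functional. -/
noncomputable def cmap (φ : MvPolynomial (Fin 2) ℂ →ₗ[ℂ] ℂ) :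
    Polynomial (MvPolynomial (Fin 2) ℂ) →ₗ[ℂ] Polynomial ℂ where
  toFun P := ⟨.ofCoeff (Finsupp.mapRange φ (map_zero φ) P.toFinsupp.coeff)⟩
  map_add' P Q := by
    apply Polynomial.toFinsupp_injective
    simp only [Polynomial.toFinsupp_add]
    exact congrArg AddMonoidAlgebra.ofCoeff (Finsupp.mapRange_add (map_add φ) _ _)
  map_smul' c P := by
    apply Polynomial.toFinsupp_injective
    simp only [Polynomial.toFinsupp_smul]
    exact congrArg AddMonoidAlgebra.ofCoeff
      (Finsupp.mapRange_smul (hf := map_zero φ) (hsmul := fun x => map_smul φ c x) c _)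

lemma cmap_coeff (φ : MvPolynomial (Fin 2) ℂ →ₗ[ℂ] ℂ)
    (P : Polynomial (MvPolynomial (Fin 2) ℂ)) (j : ℕ) :
    (cmap φ P).coeff j = φ (P.coeff j) := by
  rcases P with ⟨Pf⟩
  show Polynomial.coeff ⟨.ofCoeff (Finsupp.mapRange φ (map_zero φ) Pf.coeff)⟩ j = _
  rw [Polynomial.coeff_ofFinsupp, Polynomial.coeff_ofFinsupp]
  simp [Finsupp.mapRange_apply]

lemma cmap_map_mul_C (φ : MvPolynomial (Fin 2) ℂ →ₗ[ℂ] ℂ) (q : Polynomial ℂ)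
    (a : MvPolynomial (Fin 2) ℂ) :
    cmap φ (q.map (algebraMap ℂ (MvPolynomial (Fin 2) ℂ)) * Polynomial.C a) =
      q * Polynomial.C (φ a) := by
  ext j
  rw [cmap_coeff, Polynomial.coeff_mul_C, Polynomial.coeff_mul_C, Polynomial.coeff_map,
    ← Algebra.smul_def, map_smul, smul_eq_mul]

lemma cmap_rep (φ : MvPolynomial (Fin 2) ℂ →ₗ[ℂ] ℂ) (N : ℕ) (t : ℂ) :
    cmap φ ((Polynomial.C (X 0 : MvPolynomial (Fin 2) ℂ)
        + Polynomial.X * Polynomial.C (X 1 : MvPolynomial (Fin 2) ℂ)) ^ N) =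
      ∑ c ∈ Finset.range (N + 1),
        ((Polynomial.X - Polynomial.C t) ^ c * (N.choose c : Polynomial ℂ)) *
          Polynomial.C (φ ((X 0 + MvPolynomial.C t * X 1) ^ (N - c) * (X 1) ^ c)) := by
  have hsplit : (Polynomial.C (X 0 : MvPolynomial (Fin 2) ℂ)
      + Polynomial.X * Polynomial.C (X 1 : MvPolynomial (Fin 2) ℂ)) =
      ((Polynomial.X - Polynomial.C (C t : MvPolynomial (Fin 2) ℂ))
          * Polynomial.C (X 1 : MvPolynomial (Fin 2) ℂ))
        + Polynomial.C ((X 0 + MvPolynomial.C t * X 1 : MvPolynomial (Fin 2) ℂ)) := by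
    rw [map_add Polynomial.C (X 0 : MvPolynomial (Fin 2) ℂ)
        (MvPolynomial.C t * X 1), map_mul Polynomial.C (MvPolynomial.C t) (X 1)]
    ring
  rw [hsplit, add_pow, map_sum]
  refine Finset.sum_congr rfl fun c hc => ?_
  have key : ((Polynomial.X - Polynomial.C (C t : MvPolynomial (Fin 2) ℂ))
          * Polynomial.C (X 1 : MvPolynomial (Fin 2) ℂ)) ^ c
        * Polynomial.C ((X 0 + MvPolynomial.C t * X 1 : MvPolynomial (Fin 2) ℂ)) ^ (N - c)
        * (N.choose c : Polynomial (MvPolynomial (Fin 2) ℂ)) =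
      (((Polynomial.X - Polynomial.C t) ^ c * (N.choose c : Polynomial ℂ)).map
          (algebraMap ℂ (MvPolynomial (Fin 2) ℂ)))
        * Polynomial.C ((X 0 + MvPolynomial.C t * X 1) ^ (N - c) * (X 1) ^ c) := by
    simp only [Polynomial.map_mul, Polynomial.map_pow, Polynomial.map_sub, Polynomial.map_X,
      Polynomial.map_natCast, Polynomial.map_C, MvPolynomial.algebraMap_eq, map_mul, map_pow]
    rw [mul_pow]
    ring
  rw [key, cmap_map_mul_C]

/-- The key two-variable lemma. -/
lemma binary (N : ℕ) (T : Finset ℂ) (E : ℂ → ℕ) (hE : ∀ t ∈ T, E t ≤ N)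
    (hsum : N + 1 ≤ ∑ t ∈ T, (N - E t + 1)) :
    (X 0 : MvPolynomial (Fin 2) ℂ) ^ N ∈ Submodule.span ℂ
      {p : MvPolynomial (Fin 2) ℂ | ∃ t ∈ T, ∃ i, i ≤ N - E t ∧
        p = (X 0 + MvPolynomial.C t * X 1) ^ (N - i) * X 1 ^ i} := by
  by_contra hmem
  obtain ⟨φ, hφx, hφmap⟩ := Submodule.exists_dual_map_eq_bot_of_notMem hmem
    inferInstance
  have hφ0 : ∀ p ∈ Submodule.span ℂ
      {p : MvPolynomial (Fin 2) ℂ | ∃ t ∈ T, ∃ i, i ≤ N - E t ∧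
        p = (X 0 + MvPolynomial.C t * X 1) ^ (N - i) * X 1 ^ i}, φ p = 0 := by
    intro p hp
    have h1 : φ p ∈ Submodule.map φ (Submodule.span ℂ _) := Submodule.mem_map_of_mem hp
    rw [hφmap] at h1
    simpa using h1
  set P : Polynomial (MvPolynomial (Fin 2) ℂ) :=
    (Polynomial.C (X 0 : MvPolynomial (Fin 2) ℂ)
      + Polynomial.X * Polynomial.C (X 1 : MvPolynomial (Fin 2) ℂ)) ^ N with hP
  set p : Polynomial ℂ := cmap φ P with hpdef
  have hPdeg : P.natDegree ≤ N := by
    refine le_trans (Polynomial.natDegree_pow_le) ?_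
    have h1 : (Polynomial.C (X 0 : MvPolynomial (Fin 2) ℂ)
        + Polynomial.X * Polynomial.C (X 1 : MvPolynomial (Fin 2) ℂ)).natDegree ≤ 1 := by
      refine le_trans (Polynomial.natDegree_add_le _ _) ?_
      simp only [Polynomial.natDegree_C, max_le_iff]
      exact ⟨Nat.zero_le _, le_trans (Polynomial.natDegree_mul_le) (by simp)⟩
    calc N * (Polynomial.C (X 0 : MvPolynomial (Fin 2) ℂ)
        + Polynomial.X * Polynomial.C (X 1 : MvPolynomial (Fin 2) ℂ)).natDegree
        ≤ N * 1 := Nat.mul_le_mul_left N h1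
      _ = N := Nat.mul_one N
  have hpdeg : p.natDegree ≤ N := by
    rw [Polynomial.natDegree_le_iff_coeff_eq_zero]
    intro m hm
    rw [hpdef, cmap_coeff, Polynomial.coeff_eq_zero_of_natDegree_lt (lt_of_le_of_lt hPdeg hm),
      map_zero]
  have hdvd : ∀ t ∈ T, (Polynomial.X - Polynomial.C t) ^ (N - E t + 1) ∣ p := by
    intro t ht
    rw [hpdef, hP, cmap_rep φ N t]
    refine Finset.dvd_sum fun c hc => ?_
    by_cases hcle : c ≤ N - E t
    · have h0 : φ ((X 0 + MvPolynomial.C t * X 1) ^ (N - c) * (X 1) ^ c) = 0 :=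
        hφ0 _ (Submodule.subset_span ⟨t, ht, c, hcle, rfl⟩)
      simp [h0]
    · push_neg at hcle
      exact Dvd.dvd.mul_right (Dvd.dvd.mul_right (pow_dvd_pow _ (by omega)) _) _
  have hp0 : p = 0 := by
    by_contra hpne
    have hq : (∏ t ∈ T, (Polynomial.X - Polynomial.C t) ^ (N - E t + 1)) ∣ p := by
      refine Finset.prod_dvd_of_coprime ?_ fun t ht => hdvd t ht
      intro a ha b hb hab
      exact (Polynomial.pairwise_coprime_X_sub_C (Function.injective_id) hab).pow
    have hqdeg : (∏ t ∈ T, (Polynomial.X - Polynomial.C t) ^ (N - E t + 1)).natDegree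
        = ∑ t ∈ T, (N - E t + 1) := by
      rw [Polynomial.natDegree_prod_of_monic _ _ fun t ht => (Polynomial.monic_X_sub_C t).pow _]
      refine Finset.sum_congr rfl fun t ht => ?_
      rw [Polynomial.natDegree_pow, Polynomial.natDegree_X_sub_C, mul_one]
    have := Polynomial.natDegree_le_of_dvd hq hpne
    omega
  have hc0 : φ ((X 0 : MvPolynomial (Fin 2) ℂ) ^ N) = 0 := by
    have h0 : p.coeff 0 = φ (P.coeff 0) := by rw [hpdef, cmap_coeff]
    have hP0 : P.coeff 0 = (X 0 : MvPolynomial (Fin 2) ℂ) ^ N := by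
      rw [Polynomial.coeff_zero_eq_eval_zero, hP]
      simp
    rw [hp0, hP0] at h0
    simpa using h0.symm
  exact hφx hc0

lemma linPoly_add_smul {r : ℕ} (v y : Fin r → ℂ) (t : ℂ) :
    linPoly (v + t • y) = linPoly v + MvPolynomial.C t * linPoly y := by
  unfold linPoly
  rw [Finset.mul_sum, ← Finset.sum_add_distrib]
  refine Finset.sum_congr rfl fun j _ => ?_
  have : (v + t • y) j = v j + t * y j := rfl
  rw [this, MvPolynomial.C_add, MvPolynomial.C_mul]
  ring

/-- The subspace of vectors vanishing on all hyperplanes containing `v`. -/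
noncomputable def Vsub {r n : ℕ} (l : Fin n → ((Fin r → ℂ) →ₗ[ℂ] ℂ)) (v : Fin r → ℂ) :
    Submodule ℂ (Fin r → ℂ) :=
  ⨅ i ∈ {i : Fin n | l i v = 0}, LinearMap.ker (l i)

lemma mem_Vsub {r n : ℕ} {l : Fin n → ((Fin r → ℂ) →ₗ[ℂ] ℂ)} {v w : Fin r → ℂ} :
    w ∈ Vsub l v ↔ ∀ i, l i v = 0 → l i w = 0 := by
  simp [Vsub, Submodule.mem_iInf, LinearMap.mem_ker, Set.mem_setOf_eq]

lemma key {r n : ℕ} (l : Fin n → ((Fin r → ℂ) →ₗ[ℂ] ℂ))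
    (hess : ∀ x : Fin r → ℂ, (∀ i, l i x = 0) → x = 0)
    (k : ℤ) (hk : k ≤ 0) :
    ∀ (d : ℕ) (v : Fin r → ℂ), v ≠ 0 → Module.finrank ℂ (Vsub l v) ≤ d →
      linPoly v ^ (((rho l v : ℤ) + k + 1).toNat) ∈
        Ideal.span {p : MvPolynomial (Fin r) ℂ | ∃ v : Fin r → ℂ, IsCocircuitVec l v ∧
          p = linPoly v ^ (((rho l v : ℤ) + k + 1).toNat)} := by
  intro d
  induction d with
  | zero =>
    intro v hv hd
    exfalso
    have hvV : v ∈ Vsub l v := mem_Vsub.2 fun i hi => hi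
    have h1 : (1 : ℕ) ≤ Module.finrank ℂ (Vsub l v) := by
      have hle : (ℂ ∙ v) ≤ Vsub l v := (Submodule.span_singleton_le_iff_mem v _).2 hvV
      have := Submodule.finrank_mono hle
      rwa [finrank_span_singleton hv] at this
    omega
  | succ d ih =>
    intro v hv hd
    classical
    have hvV : v ∈ Vsub l v := mem_Vsub.2 fun i hi => hi
    by_cases hdim : Module.finrank ℂ (Vsub l v) ≤ 1
    · -- cocircuit case
      have hle : (ℂ ∙ v) ≤ Vsub l v := (Submodule.span_singleton_le_iff_mem v _).2 hvV
      have heq : (ℂ ∙ v) = Vsub l v := by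
        refine Submodule.eq_of_le_of_finrank_le hle ?_
        rw [finrank_span_singleton hv]
        exact hdim
      have hcoc : IsCocircuitVec l v := by
        refine ⟨hv, fun w hw => ?_⟩
        have hwv : w ∈ (ℂ ∙ v) := heq ▸ mem_Vsub.2 hw
        obtain ⟨c, hc⟩ := Submodule.mem_span_singleton.1 hwv
        exact ⟨c, hc.symm⟩
      exact Ideal.subset_span ⟨v, hcoc, rfl⟩
    · push_neg at hdim
      -- main case: dim Vsub ≥ 2
      set Sv : Finset (Fin n) := Finset.univ.filter (fun i => l i v ≠ 0) with hSv
      have hrho : rho l v = Sv.card := by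
        rw [rho, Nat.card_eq_fintype_card, Fintype.card_subtype]
      have hSvne : Sv.Nonempty := by
        by_contra h
        rw [Finset.not_nonempty_iff_eq_empty] at h
        refine hv (hess v fun i => ?_)
        by_contra hi
        have : i ∈ Sv := by simp [hSv, hi]
        simp [h] at this
      -- choose generic direction y
      have hvv0 : (⟨v, hvV⟩ : Vsub l v) ≠ 0 := by
        intro h
        exact hv (congrArg Subtype.val h)
      obtain ⟨y', hy'⟩ : ∃ y' : Vsub l v,
          y' ∉ Submodule.span ℂ {(⟨v, hvV⟩ : Vsub l v)} ∧ ∀ i ∈ Sv, l i (y' : Fin r → ℂ) ≠ 0 := by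
        set s : Finset (Subspace ℂ (Vsub l v)) :=
          insert (Submodule.span ℂ {(⟨v, hvV⟩ : Vsub l v)})
            (Sv.image fun i => LinearMap.ker ((l i).comp (Vsub l v).subtype)) with hs
        have htop : ⊤ ∉ s := by
          intro htop
          rw [hs, Finset.mem_insert] at htop
          rcases htop with h | h
          · have h2 := finrank_span_singleton (K := ℂ) hvv0
            rw [← h, finrank_top] at h2
            omega
          · obtain ⟨i, hi, hker⟩ := Finset.mem_image.1 h
            have : (⟨v, hvV⟩ : Vsub l v) ∈ LinearMap.ker ((l i).comp (Vsub l v).subtype) := by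
              rw [hker]; trivial
            have hlv : l i v = 0 := this
            have : i ∈ Sv := hi
            rw [hSv, Finset.mem_filter] at this
            exact this.2 hlv
        have hne := Subspace.biUnion_ne_univ_of_top_notMem htop
        obtain ⟨y', hy'⟩ := Set.ne_univ_iff_exists_notMem _ |>.1 hne
        refine ⟨y', ?_, ?_⟩
        · intro hmem
          exact hy' (Set.mem_biUnion (by rw [hs]; exact Finset.mem_insert_self _ _) hmem)
        · intro i hi hzero
          have hmem_s : LinearMap.ker ((l i).comp (Vsub l v).subtype) ∈ s := by
            rw [hs]
            exact Finset.mem_insert_of_mem (Finset.mem_image_of_mem _ hi)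
          exact hy' (Set.mem_biUnion hmem_s hzero)
      set y : Fin r → ℂ := (y' : Fin r → ℂ) with hy
      have hyV : ∀ i, l i v = 0 → l i y = 0 := mem_Vsub.1 y'.2
      have hyS : ∀ i ∈ Sv, l i y ≠ 0 := hy'.2
      set tval : Fin n → ℂ := fun i => -(l i v) / (l i y) with htval
      set z : ℂ → (Fin r → ℂ) := fun t => v + t • y with hz
      have hz_li : ∀ i ∈ Sv, ∀ t : ℂ, l i (z t) = 0 ↔ t = tval i := by
        intro i hi t
        have hB := hyS i hi
        have hzval : l i (z t) = l i v + t * l i y := by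
          rw [hz]; simp [map_add, map_smul, smul_eq_mul]
        rw [hzval, htval]
        constructor
        · intro h
          field_simp
          linear_combination h
        · intro h
          rw [h]
          field_simp
          ring
      have hzi0 : ∀ (t : ℂ) (i : Fin n), l i v = 0 → l i (z t) = 0 := by
        intro t i hi
        rw [hz]
        simp [map_add, map_smul, smul_eq_mul, hi, hyV i hi]
      have hsupp : ∀ t : ℂ, (Finset.univ.filter fun i => l i (z t) ≠ 0)
          = Sv.filter (fun i => ¬ tval i = t) := by
        intro t
        ext i
        simp only [Finset.mem_filter, Finset.mem_univ, true_and, hSv]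
        by_cases hiv : l i v = 0
        · simp [hzi0 t i hiv, hiv]
        · have hi : i ∈ Sv := by rw [hSv]; simp [hiv]
          have := hz_li i hi t
          constructor
          · intro hzne
            refine ⟨by simpa [hSv] using hi, fun he => hzne (this.2 he.symm)⟩
          · intro ⟨_, hne⟩ hze
            exact hne (this.1 hze).symm
      have hrhoz : ∀ t : ℂ, rho l (z t) + (Sv.filter fun i => tval i = t).card = rho l v := by
        intro t
        have h1 : rho l (z t) = (Finset.univ.filter fun i => l i (z t) ≠ 0).card := by
          rw [rho, Nat.card_eq_fintype_card, Fintype.card_subtype]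
        rw [h1, hsupp t, hrho, add_comm]
        exact Finset.card_filter_add_card_filter_not _
      set T : Finset ℂ := Sv.image tval with hT
      have hz0 : ∀ t : ℂ, z t ≠ 0 := by
        intro t h0
        by_cases ht : t = 0
        · rw [ht] at h0
          apply hv
          simpa [hz] using h0
        · apply hy'.1
          rw [Submodule.mem_span_singleton]
          refine ⟨-t⁻¹, ?_⟩
          apply Subtype.ext
          show -t⁻¹ • v = y
          funext j
          have := congrFun h0 j
          simp only [hz, Pi.add_apply, Pi.smul_apply, smul_eq_mul, Pi.zero_apply] at this
          simp only [Pi.smul_apply, smul_eq_mul]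
          field_simp
          linear_combination -this
      have hzlt : ∀ t ∈ T, Module.finrank ℂ (Vsub l (z t)) < Module.finrank ℂ (Vsub l v) := by
        intro t ht
        refine Submodule.finrank_lt_finrank_of_lt ?_
        obtain ⟨i₀, hi₀, hti₀⟩ := Finset.mem_image.1 ht
        have hz0' : l i₀ (z t) = 0 := (hz_li i₀ hi₀ t).2 hti₀.symm
        have hlv : l i₀ v ≠ 0 := by
          have := hi₀; rw [hSv, Finset.mem_filter] at this; exact this.2
        constructor
        · intro w hw
          refine mem_Vsub.2 fun i hi => ?_
          exact mem_Vsub.1 hw i (hzi0 t i hi)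
        · intro hge
          have hvz : v ∈ Vsub l (z t) := hge hvV
          exact hlv (mem_Vsub.1 hvz i₀ hz0')
      set N : ℕ := ((rho l v : ℤ) + k + 1).toNat with hN
      set E : ℂ → ℕ := fun t => ((rho l (z t) : ℤ) + k + 1).toNat with hE
      have hEN : ∀ t ∈ T, E t ≤ N := by
        intro t ht
        have := hrhoz t
        simp only [hE, hN]
        omega
      have hTne : T.Nonempty := hSvne.image tval
      have hT2 : 2 ≤ T.card := by
        obtain ⟨t₀, ht₀⟩ := hTne
        have hzt0 : z t₀ ≠ 0 := hz0 t₀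
        have : ∃ i, l i (z t₀) ≠ 0 := by
          by_contra h
          push_neg at h
          exact hzt0 (hess _ h)
        obtain ⟨i, hi⟩ := this
        have hiSv : i ∈ Sv := by
          rw [hSv, Finset.mem_filter]
          refine ⟨Finset.mem_univ _, fun h0 => hi (hzi0 t₀ i h0)⟩
        have hne : tval i ≠ t₀ := fun he => hi ((hz_li i hiSv t₀).2 he.symm)
        have := Finset.one_lt_card.2 ⟨t₀, ht₀, tval i, Finset.mem_image_of_mem tval hiSv, hne.symm⟩
        omega
      have hsum : N + 1 ≤ ∑ t ∈ T, (N - E t + 1) := by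
        have hfib : ∑ t ∈ T, (Sv.filter fun i => tval i = t).card = Sv.card :=
          (Finset.card_eq_sum_card_fiberwise fun i hi => Finset.mem_image_of_mem tval hi).symm
        have hterm : ∀ t ∈ T, min ((Sv.filter fun i => tval i = t).card) N + 1 ≤ N - E t + 1 := by
          intro t ht
          have h1 := hrhoz t
          simp only [hE, hN]
          omega
        have h2 : ∑ t ∈ T, (min ((Sv.filter fun i => tval i = t).card) N + 1)
            ≤ ∑ t ∈ T, (N - E t + 1) := Finset.sum_le_sum hterm
        refine le_trans ?_ h2
        by_cases hex : ∃ t₀ ∈ T, N ≤ (Sv.filter fun i => tval i = t₀).card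
        · obtain ⟨t₀, ht₀, hge⟩ := hex
          have : min ((Sv.filter fun i => tval i = t₀).card) N + 1 = N + 1 := by omega
          calc N + 1 = min ((Sv.filter fun i => tval i = t₀).card) N + 1 := this.symm
            _ ≤ _ := Finset.single_le_sum (f := fun t => min ((Sv.filter fun i => tval i = t).card) N + 1)
              (fun t _ => Nat.zero_le _) ht₀
        · push_neg at hex
          have heq : ∀ t ∈ T, min ((Sv.filter fun i => tval i = t).card) N + 1
              = (Sv.filter fun i => tval i = t).card + 1 := by
            intro t ht
            have := hex t ht
            omega
          rw [Finset.sum_congr rfl heq, Finset.sum_add_distrib, hfib, Finset.sum_const,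
            smul_eq_mul, mul_one]
          have hNle : N ≤ Sv.card + 1 := by
            rw [hN, hrho]
            omega
          omega
      -- apply the binary lemma and transport
      have habs := binary N T E hEN hsum
      set g : MvPolynomial (Fin 2) ℂ →ₐ[ℂ] MvPolynomial (Fin r) ℂ :=
        MvPolynomial.aeval ![linPoly v, linPoly y] with hg
      have hgx : g ((X 0 : MvPolynomial (Fin 2) ℂ) ^ N) = linPoly v ^ N := by
        rw [map_pow, hg]
        simp
      have hmem2 := Submodule.apply_mem_span_image_of_mem_span (g.toLinearMap) habs
      set J := Ideal.span {p : MvPolynomial (Fin r) ℂ | ∃ v : Fin r → ℂ, IsCocircuitVec l v ∧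
          p = linPoly v ^ (((rho l v : ℤ) + k + 1).toNat)} with hJ
      have himage : Submodule.span ℂ (g.toLinearMap ''
          {p : MvPolynomial (Fin 2) ℂ | ∃ t ∈ T, ∃ i, i ≤ N - E t ∧
            p = (X 0 + MvPolynomial.C t * X 1) ^ (N - i) * X 1 ^ i}) ≤ J.restrictScalars ℂ := by
        rw [Submodule.span_le]
        rintro q ⟨gen, ⟨t, ht, i, hile, rfl⟩, rfl⟩
        have hzmem : linPoly (z t) ^ E t ∈ J := by
          rw [hJ, hE]
          exact ih (z t) (hz0 t) (by have := hzlt t ht; omega)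
        have hlz : linPoly (z t) = linPoly v + MvPolynomial.C t * linPoly y := by
          rw [hz]
          exact linPoly_add_smul v y t
        have hgeval : g.toLinearMap ((X 0 + MvPolynomial.C t * X 1) ^ (N - i) * X 1 ^ i)
            = linPoly (z t) ^ (N - i) * linPoly y ^ i := by
          show g ((X 0 + MvPolynomial.C t * X 1) ^ (N - i) * X 1 ^ i) = _
          rw [hlz, hg]
          simp [map_mul, map_pow, map_add, MvPolynomial.aeval_X, MvPolynomial.aeval_C,
            MvPolynomial.algebraMap_eq]
        have hsplitpow : linPoly (z t) ^ (N - i)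
            = linPoly (z t) ^ (E t) * linPoly (z t) ^ (N - i - E t) := by
          rw [← pow_add]
          congr 1
          have h1 := hEN t ht
          omega
        show g.toLinearMap ((X 0 + MvPolynomial.C t * X 1) ^ (N - i) * X 1 ^ i) ∈ J
        rw [hgeval, hsplitpow, mul_assoc]
        exact Ideal.mul_mem_right _ _ hzmem
      have h3 := himage hmem2
      have h4 : linPoly v ^ N ∈ J := by
        have h5 : g.toLinearMap ((X 0 : MvPolynomial (Fin 2) ℂ) ^ N) ∈ J := h3
        rwa [AlgHom.toLinearMap_apply, hgx] at h5
      simpa only [hN] using h4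

end Stmt13Aux

/-- For `k ≤ 0`, the power ideal `(v^{ρ(v)+k+1} : v ∈ L∖{0})` of `Sym L` is generated by
the powers of cocircuit vectors.  (Exponents `≤ 0` are truncated to `0`, so that the
corresponding generator is `1`, matching the convention that the ideal is the unit ideal
in that case.) -/
theorem stmt13 (r n : ℕ) (l : Fin n → ((Fin r → ℂ) →ₗ[ℂ] ℂ))
    (hess : ∀ x : Fin r → ℂ, (∀ i, l i x = 0) → x = 0)
    (k : ℤ) (hk : k ≤ 0) :
    Ideal.span {p : MvPolynomial (Fin r) ℂ | ∃ v : Fin r → ℂ, v ≠ 0 ∧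
        p = linPoly v ^ (((rho l v : ℤ) + k + 1).toNat)} =
      Ideal.span {p : MvPolynomial (Fin r) ℂ | ∃ v : Fin r → ℂ, IsCocircuitVec l v ∧
        p = linPoly v ^ (((rho l v : ℤ) + k + 1).toNat)} := by
  apply le_antisymm
  · rw [Ideal.span_le]
    rintro p ⟨v, hv, rfl⟩
    exact Stmt13Aux.key l hess k hk (Module.finrank ℂ (Fin r → ℂ)) v hv
      (Submodule.finrank_le _)
  · exact Ideal.span_mono (by rintro p ⟨v, hc, rfl⟩; exact ⟨v, hc.1, rfl⟩)
end
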